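/- arXiv:0806.1597 — 5 statements merged into one kernel-verified Lean document; each statement's English description precedes it below -/
import Mathlib

section
/- Let v : [t₀,t₁) → ℝ solve the Riccati-type ODE v' = A₂(t)v² + A₁(t)v + A₀(t) with v(t₀) = v₀, where A₂, A₁, A₀ are continuous and bounded on [t₀,t₁) and A₂ ≥ 0. Define K₁(t) = ∫_{t₀}^t A₁, K₀(t) = ∫_{t₀}^t |A₀| e^{-K₁}, K₂(t) = ∫_{t₀}^t A₂ e^{K₁}. If v₀ > K₀(t₁) (where K₀(t₁), K₂(t₁) denote the limits as t → t₁), then K₂(t₁) < (v₀ - K₀(t₁))⁻¹. -/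
open MeasureTheory intervalIntegral Set Filter

noncomputable def rK1 (A₁ : ℝ → ℝ) (t₀ : ℝ) : ℝ → ℝ := fun t => ∫ y in t₀..t, A₁ y

noncomputable def rg0 (A₁ A₀ : ℝ → ℝ) (t₀ : ℝ) : ℝ → ℝ :=
  fun x => |A₀ x| * Real.exp (-(rK1 A₁ t₀ x))

noncomputable def rg2 (A₁ A₂ : ℝ → ℝ) (t₀ : ℝ) : ℝ → ℝ :=
  fun x => A₂ x * Real.exp (rK1 A₁ t₀ x)

noncomputable def rK0 (A₁ A₀ : ℝ → ℝ) (t₀ : ℝ) : ℝ → ℝ :=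
  fun t => ∫ x in t₀..t, rg0 A₁ A₀ t₀ x

noncomputable def rK2 (A₁ A₂ : ℝ → ℝ) (t₀ : ℝ) : ℝ → ℝ :=
  fun t => ∫ x in t₀..t, rg2 A₁ A₂ t₀ x

noncomputable def rz (A₁ A₀ v : ℝ → ℝ) (t₀ c : ℝ) : ℝ → ℝ :=
  fun t => Real.exp (-(rK1 A₁ t₀ t)) * v t + rK0 A₁ A₀ t₀ t - c

/-- Riccati blowup lemma, first conclusion: if the solution `v` of
`v' = A₂ v² + A₁ v + A₀` exists (and is bounded) on `[t₀, t₁)` with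
`v t₀ > K₀(t₁)`, then `K₂(t₁) < (v t₀ - K₀(t₁))⁻¹`. -/
theorem stmt_0
    (t₀ t₁ : ℝ) (ht : t₀ < t₁)
    (A₂ A₁ A₀ v : ℝ → ℝ)
    (hA₂c : ContinuousOn A₂ (Set.Ico t₀ t₁))
    (hA₁c : ContinuousOn A₁ (Set.Ico t₀ t₁))
    (hA₀c : ContinuousOn A₀ (Set.Ico t₀ t₁))
    (B : ℝ) (hB : ∀ t ∈ Set.Ico t₀ t₁, |A₂ t| ≤ B ∧ |A₁ t| ≤ B ∧ |A₀ t| ≤ B)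
    (hA₂pos : ∀ t ∈ Set.Ico t₀ t₁, 0 ≤ A₂ t)
    (hv : ∀ t ∈ Set.Ico t₀ t₁, HasDerivAt v (A₂ t * v t ^ 2 + A₁ t * v t + A₀ t) t)
    (Mv : ℝ) (hvb : ∀ t ∈ Set.Ico t₀ t₁, |v t| ≤ Mv)
    (K₀lim K₂lim : ℝ)
    (hK₀ : Filter.Tendsto
      (fun t => ∫ x in t₀..t, |A₀ x| * Real.exp (-(∫ y in t₀..x, A₁ y)))
      (nhdsWithin t₁ (Set.Iio t₁)) (nhds K₀lim))
    (hK₂ : Filter.Tendsto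
      (fun t => ∫ x in t₀..t, A₂ x * Real.exp (∫ y in t₀..x, A₁ y))
      (nhdsWithin t₁ (Set.Iio t₁)) (nhds K₂lim))
    (hv₀ : v t₀ > K₀lim) :
    K₂lim < (v t₀ - K₀lim)⁻¹ := by
  classical
  have hK₀' : Filter.Tendsto (rK0 A₁ A₀ t₀) (nhdsWithin t₁ (Set.Iio t₁)) (nhds K₀lim) := hK₀
  have hK₂' : Filter.Tendsto (rK2 A₁ A₂ t₀) (nhdsWithin t₁ (Set.Iio t₁)) (nhds K₂lim) := hK₂
  have hB0 : 0 ≤ B := le_trans (abs_nonneg _) (hB t₀ ⟨le_refl _, ht⟩).1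
  have hMv0 : 0 ≤ Mv := le_trans (abs_nonneg _) (hvb t₀ ⟨le_refl _, ht⟩)
  -- K₀ is everywhere nonnegative
  have hK0nonneg : ∀ t, t₀ ≤ t → 0 ≤ rK0 A₁ A₀ t₀ t := fun t htt =>
    intervalIntegral.integral_nonneg htt
      (fun u _ => mul_nonneg (abs_nonneg _) (Real.exp_pos _).le)
  have hK₀limnonneg : 0 ≤ K₀lim := by
    refine ge_of_tendsto hK₀' ?_
    filter_upwards [Ioo_mem_nhdsLT_of_mem (Set.mem_Ioc.2 ⟨ht, le_refl t₁⟩)] with x hx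
    exact hK0nonneg x hx.1.le
  have hv0pos : 0 < v t₀ := lt_of_le_of_lt hK₀limnonneg hv₀
  -- small subsets
  have hIccsub : ∀ {x : ℝ}, x ∈ Set.Ico t₀ t₁ → Set.Icc t₀ x ⊆ Set.Ico t₀ t₁ :=
    fun {x} hx y hy => ⟨hy.1, lt_of_le_of_lt hy.2 hx.2⟩
  have hmemnhds : ∀ x ∈ Set.Ioo t₀ t₁, Set.Ico t₀ t₁ ∈ nhds x :=
    fun x hx => Ico_mem_nhds hx.1 hx.2
  -- interval integrability of A₁
  have hA₁int : ∀ x ∈ Set.Ico t₀ t₁, IntervalIntegrable A₁ volume t₀ x := fun x hx =>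
    (hA₁c.mono (hIccsub hx)).intervalIntegrable_of_Icc hx.1
  -- continuity of K1 on Icc t₀ s
  have hK1cont : ∀ s ∈ Set.Ico t₀ t₁, ContinuousOn (rK1 A₁ t₀) (Set.Icc t₀ s) := by
    intro s hs
    have h1 : IntegrableOn A₁ (Set.uIcc t₀ s) volume := by
      rw [Set.uIcc_of_le hs.1]
      exact (hA₁c.mono (hIccsub hs)).integrableOn_Icc
    have := intervalIntegral.continuousOn_primitive_interval h1
    rwa [Set.uIcc_of_le hs.1] at this
  -- derivative of K1
  have hK1d : ∀ x ∈ Set.Ioo t₀ t₁, HasDerivAt (rK1 A₁ t₀) (A₁ x) x := by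
    intro x hx
    exact intervalIntegral.integral_hasDerivAt_right (hA₁int x ⟨hx.1.le, hx.2⟩)
      (ContinuousAt.stronglyMeasurableAtFilter isOpen_Ioo
        (fun y hy => hA₁c.continuousAt (hmemnhds y hy)) x hx)
      (hA₁c.continuousAt (hmemnhds x hx))
  -- continuity of integrands g0 and g2 on Icc t₀ s
  have hg0cont : ∀ s ∈ Set.Ico t₀ t₁, ContinuousOn (rg0 A₁ A₀ t₀) (Set.Icc t₀ s) := by
    intro s hs
    exact ((hA₀c.mono (hIccsub hs)).abs).mul
      (Real.continuous_exp.comp_continuousOn ((hK1cont s hs).neg))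
  have hg2cont : ∀ s ∈ Set.Ico t₀ t₁, ContinuousOn (rg2 A₁ A₂ t₀) (Set.Icc t₀ s) := by
    intro s hs
    exact (hA₂c.mono (hIccsub hs)).mul
      (Real.continuous_exp.comp_continuousOn (hK1cont s hs))
  have hg0int : ∀ x ∈ Set.Ico t₀ t₁, IntervalIntegrable (rg0 A₁ A₀ t₀) volume t₀ x :=
    fun x hx => (hg0cont x hx).intervalIntegrable_of_Icc hx.1
  have hg2int : ∀ x ∈ Set.Ico t₀ t₁, IntervalIntegrable (rg2 A₁ A₂ t₀) volume t₀ x :=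
    fun x hx => (hg2cont x hx).intervalIntegrable_of_Icc hx.1
  -- pointwise continuity of g0, g2 at interior points
  have hg0ca : ∀ x ∈ Set.Ioo t₀ t₁, ContinuousAt (rg0 A₁ A₀ t₀) x := fun x hx =>
    ((hA₀c.continuousAt (hmemnhds x hx)).abs).mul
      (Real.continuous_exp.continuousAt.comp ((hK1d x hx).continuousAt).neg)
  have hg2ca : ∀ x ∈ Set.Ioo t₀ t₁, ContinuousAt (rg2 A₁ A₂ t₀) x := fun x hx =>
    (hA₂c.continuousAt (hmemnhds x hx)).mul
      (Real.continuous_exp.continuousAt.comp ((hK1d x hx).continuousAt))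
  -- derivatives of K0 and K2
  have hK0d : ∀ x ∈ Set.Ioo t₀ t₁, HasDerivAt (rK0 A₁ A₀ t₀) (rg0 A₁ A₀ t₀ x) x := by
    intro x hx
    exact intervalIntegral.integral_hasDerivAt_right (hg0int x ⟨hx.1.le, hx.2⟩)
      (ContinuousAt.stronglyMeasurableAtFilter isOpen_Ioo hg0ca x hx)
      (hg0ca x hx)
  have hK2d : ∀ x ∈ Set.Ioo t₀ t₁, HasDerivAt (rK2 A₁ A₂ t₀) (rg2 A₁ A₂ t₀ x) x := by
    intro x hx
    exact intervalIntegral.integral_hasDerivAt_right (hg2int x ⟨hx.1.le, hx.2⟩)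
      (ContinuousAt.stronglyMeasurableAtFilter isOpen_Ioo hg2ca x hx)
      (hg2ca x hx)
  -- derivative of z
  have hzd : ∀ x ∈ Set.Ioo t₀ t₁, HasDerivAt (rz A₁ A₀ v t₀ K₀lim)
      (Real.exp (-(rK1 A₁ t₀ x)) * (A₂ x * v x ^ 2 + A₀ x)
        + |A₀ x| * Real.exp (-(rK1 A₁ t₀ x))) x := by
    intro x hx
    have hE : HasDerivAt (fun t => Real.exp (-(rK1 A₁ t₀ t)))
        (Real.exp (-(rK1 A₁ t₀ x)) * (-(A₁ x))) x := ((hK1d x hx).neg).exp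
    have hw : HasDerivAt (fun t => Real.exp (-(rK1 A₁ t₀ t)) * v t)
        (Real.exp (-(rK1 A₁ t₀ x)) * (-(A₁ x)) * v x
          + Real.exp (-(rK1 A₁ t₀ x)) * (A₂ x * v x ^ 2 + A₁ x * v x + A₀ x)) x :=
      hE.mul (hv x ⟨hx.1.le, hx.2⟩)
    have this2 := hw.add (hK0d x hx)
    have heq : Real.exp (-(rK1 A₁ t₀ x)) * (-(A₁ x)) * v x
          + Real.exp (-(rK1 A₁ t₀ x)) * (A₂ x * v x ^ 2 + A₁ x * v x + A₀ x)
          + rg0 A₁ A₀ t₀ x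
        = Real.exp (-(rK1 A₁ t₀ x)) * (A₂ x * v x ^ 2 + A₀ x)
          + |A₀ x| * Real.exp (-(rK1 A₁ t₀ x)) := by
      simp only [rg0]; ring
    rw [heq] at this2
    exact this2.sub_const K₀lim
  -- z value at t₀
  have hzt₀ : rz A₁ A₀ v t₀ K₀lim t₀ = v t₀ - K₀lim := by
    simp [rz, rK0, rK1]
  -- K₀ f stays below its limit
  have hK0le : ∀ x ∈ Set.Ico t₀ t₁, rK0 A₁ A₀ t₀ x ≤ K₀lim := by
    intro x hx
    refine ge_of_tendsto hK₀' ?_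
    filter_upwards [Ioo_mem_nhdsLT_of_mem (Set.mem_Ioc.2 ⟨hx.2, le_refl t₁⟩)] with u hu
    have hu' : u ∈ Set.Ico t₀ t₁ := ⟨le_trans hx.1 hu.1.le, hu.2⟩
    have hint2 : IntervalIntegrable (rg0 A₁ A₀ t₀) volume x u :=
      ((hg0cont u hu').mono (Set.Icc_subset_Icc_left hx.1)).intervalIntegrable_of_Icc hu.1.le
    have hsplit := intervalIntegral.integral_add_adjacent_intervals (hg0int x hx) hint2
    have hnn : 0 ≤ ∫ y in x..u, rg0 A₁ A₀ t₀ y :=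
      intervalIntegral.integral_nonneg hu.1.le
        (fun y _ => mul_nonneg (abs_nonneg _) (Real.exp_pos _).le)
    show rK0 A₁ A₀ t₀ x ≤ rK0 A₁ A₀ t₀ u
    simp only [rK0] at hsplit ⊢
    linarith
  -- continuity of z on Icc t₀ s
  have hvc : ∀ s ∈ Set.Ico t₀ t₁, ContinuousOn v (Set.Icc t₀ s) := fun s hs x hx =>
    ((hv x (hIccsub hs hx)).continuousAt).continuousWithinAt
  have hK0cont : ∀ s ∈ Set.Ico t₀ t₁, ContinuousOn (rK0 A₁ A₀ t₀) (Set.Icc t₀ s) := by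
    intro s hs
    have h1 : IntegrableOn (rg0 A₁ A₀ t₀) (Set.uIcc t₀ s) volume := by
      rw [Set.uIcc_of_le hs.1]; exact (hg0cont s hs).integrableOn_Icc
    have := intervalIntegral.continuousOn_primitive_interval h1
    rwa [Set.uIcc_of_le hs.1] at this
  have hK2cont : ∀ s ∈ Set.Ico t₀ t₁, ContinuousOn (rK2 A₁ A₂ t₀) (Set.Icc t₀ s) := by
    intro s hs
    have h1 : IntegrableOn (rg2 A₁ A₂ t₀) (Set.uIcc t₀ s) volume := by
      rw [Set.uIcc_of_le hs.1]; exact (hg2cont s hs).integrableOn_Icc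
    have := intervalIntegral.continuousOn_primitive_interval h1
    rwa [Set.uIcc_of_le hs.1] at this
  have hzc : ∀ s ∈ Set.Ico t₀ t₁, ContinuousOn (rz A₁ A₀ v t₀ K₀lim) (Set.Icc t₀ s) := by
    intro s hs
    exact (((Real.continuous_exp.comp_continuousOn ((hK1cont s hs).neg)).mul
      (hvc s hs)).add (hK0cont s hs)).sub continuousOn_const
  -- z is monotone on Icc t₀ s
  have hzmono : ∀ s ∈ Set.Ico t₀ t₁, MonotoneOn (rz A₁ A₀ v t₀ K₀lim) (Set.Icc t₀ s) := by
    intro s hs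
    refine monotoneOn_of_deriv_nonneg (convex_Icc t₀ s) (hzc s hs) ?_ ?_
    · intro x hx
      rw [interior_Icc] at hx
      have hx' : x ∈ Set.Ioo t₀ t₁ := ⟨hx.1, lt_trans hx.2 hs.2⟩
      exact ((hzd x hx').differentiableAt).differentiableWithinAt
    · intro x hx
      rw [interior_Icc] at hx
      have hx' : x ∈ Set.Ioo t₀ t₁ := ⟨hx.1, lt_trans hx.2 hs.2⟩
      rw [(hzd x hx').deriv]
      have h1 : 0 < Real.exp (-(rK1 A₁ t₀ x)) := Real.exp_pos _
      have h2 : 0 ≤ A₂ x := hA₂pos x ⟨hx'.1.le, hx'.2⟩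
      have h3 : -|A₀ x| ≤ A₀ x := neg_abs_le _
      nlinarith [sq_nonneg (v x), mul_nonneg h2 (sq_nonneg (v x))]
  -- z ≥ v t₀ on Ico
  have hzge : ∀ x ∈ Set.Ico t₀ t₁, v t₀ - K₀lim ≤ rz A₁ A₀ v t₀ K₀lim x := by
    intro x hx
    have := hzmono x hx (Set.left_mem_Icc.2 hx.1) (Set.right_mem_Icc.2 hx.1) hx.1
    rwa [hzt₀] at this
  -- upper bound Z for z
  set Z : ℝ := Real.exp (B * (t₁ - t₀)) * Mv with hZdef
  have hzle : ∀ x ∈ Set.Ico t₀ t₁, rz A₁ A₀ v t₀ K₀lim x ≤ Z := by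
    intro x hx
    have hK1bd : -(rK1 A₁ t₀ x) ≤ B * (t₁ - t₀) := by
      have h1 : ‖∫ y in t₀..x, A₁ y‖ ≤ B * |x - t₀| := by
        apply intervalIntegral.norm_integral_le_of_norm_le_const
        intro y hy
        rw [Set.uIoc_of_le hx.1] at hy
        exact (hB y ⟨le_of_lt hy.1, lt_of_le_of_lt hy.2 hx.2⟩).2.1
      have h2 : |x - t₀| = x - t₀ := abs_of_nonneg (by linarith [hx.1])
      rw [h2] at h1
      have h3 : B * (x - t₀) ≤ B * (t₁ - t₀) :=
        mul_le_mul_of_nonneg_left (by linarith [hx.2.le]) hB0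
      have h4 : -(rK1 A₁ t₀ x) ≤ |rK1 A₁ t₀ x| := neg_le_abs _
      calc -(rK1 A₁ t₀ x) ≤ |rK1 A₁ t₀ x| := h4
        _ ≤ B * (x - t₀) := h1
        _ ≤ B * (t₁ - t₀) := h3
    have h5 : Real.exp (-(rK1 A₁ t₀ x)) * v x ≤ Real.exp (B * (t₁ - t₀)) * Mv := by
      have hvx : v x ≤ Mv := le_trans (le_abs_self _) (hvb x hx)
      have hexp : Real.exp (-(rK1 A₁ t₀ x)) ≤ Real.exp (B * (t₁ - t₀)) :=
        Real.exp_le_exp.2 hK1bd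
      rcases le_or_gt (v x) 0 with hvx0 | hvx0
      · calc Real.exp (-(rK1 A₁ t₀ x)) * v x ≤ 0 :=
              mul_nonpos_of_nonneg_of_nonpos (Real.exp_pos _).le hvx0
          _ ≤ Real.exp (B * (t₁ - t₀)) * Mv :=
              mul_nonneg (Real.exp_pos _).le hMv0
      · exact mul_le_mul hexp hvx hvx0.le (Real.exp_pos _).le
    have h6 : rK0 A₁ A₀ t₀ x ≤ K₀lim := hK0le x hx
    simp only [rz]
    linarith
  have hZpos : 0 < Z := lt_of_lt_of_le (sub_pos.2 hv₀)
    (le_trans (hzge t₀ ⟨le_refl _, ht⟩) (hzle t₀ ⟨le_refl _, ht⟩))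
  -- key inequality : K2 s ≤ (v t₀)⁻¹ - Z⁻¹
  have key : ∀ s ∈ Set.Ico t₀ t₁, rK2 A₁ A₂ t₀ s ≤ (v t₀ - K₀lim)⁻¹ - Z⁻¹ := by
    intro s hs
    have hzpos : ∀ x ∈ Set.Icc t₀ s, 0 < rz A₁ A₀ v t₀ K₀lim x := fun x hx =>
      lt_of_lt_of_le (sub_pos.2 hv₀) (hzge x (hIccsub hs hx))
    -- F is antitone on Icc t₀ s
    have hFanti : AntitoneOn (fun t => (rz A₁ A₀ v t₀ K₀lim t)⁻¹ + rK2 A₁ A₂ t₀ t)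
        (Set.Icc t₀ s) := by
      refine antitoneOn_of_deriv_nonpos (convex_Icc t₀ s) ?_ ?_ ?_
      · exact (((hzc s hs).inv₀ (fun x hx => (hzpos x hx).ne')).add (hK2cont s hs))
      · intro x hx
        rw [interior_Icc] at hx
        have hx' : x ∈ Set.Ioo t₀ t₁ := ⟨hx.1, lt_trans hx.2 hs.2⟩
        have hxmem : x ∈ Set.Icc t₀ s := ⟨hx.1.le, hx.2.le⟩
        exact ((((hzd x hx').inv (hzpos x hxmem).ne').add
          (hK2d x hx')).differentiableAt).differentiableWithinAt
      · intro x hx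
        rw [interior_Icc] at hx
        have hx' : x ∈ Set.Ioo t₀ t₁ := ⟨hx.1, lt_trans hx.2 hs.2⟩
        have hxmem : x ∈ Set.Icc t₀ s := ⟨hx.1.le, hx.2.le⟩
        have hzx := hzpos x hxmem
        show deriv ((rz A₁ A₀ v t₀ K₀lim)⁻¹ + rK2 A₁ A₂ t₀) x ≤ 0
        rw [(((hzd x hx').inv hzx.ne').add (hK2d x hx')).deriv]
        -- need : -(z' x) / (z x)^2 + g2 x ≤ 0
        have hzx2 : (0:ℝ) < rz A₁ A₀ v t₀ K₀lim x ^ 2 := pow_pos hzx 2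
        rw [div_add' _ _ _ hzx2.ne', div_nonpos_iff]
        right
        constructor
        · -- numerator ≤ 0 :  -(z' x) + g2 x * (z x)^2 ≤ 0
          have hωz : rz A₁ A₀ v t₀ K₀lim x ≤ Real.exp (-(rK1 A₁ t₀ x)) * v x := by
            have := hK0le x ⟨hx'.1.le, hx'.2⟩
            simp only [rz]; linarith
          have hg2z : rg2 A₁ A₂ t₀ x * (rz A₁ A₀ v t₀ K₀lim x)^2
              ≤ rg2 A₁ A₂ t₀ x * (Real.exp (-(rK1 A₁ t₀ x)) * v x)^2 := by
            apply mul_le_mul_of_nonneg_left _ _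
            · exact pow_le_pow_left₀ hzx.le hωz 2
            · exact mul_nonneg (hA₂pos x ⟨hx'.1.le, hx'.2⟩) (Real.exp_pos _).le
          have halg : rg2 A₁ A₂ t₀ x * (Real.exp (-(rK1 A₁ t₀ x)) * v x)^2
              = Real.exp (-(rK1 A₁ t₀ x)) * (A₂ x * v x ^ 2) := by
            have hEE : Real.exp (rK1 A₁ t₀ x) * Real.exp (-(rK1 A₁ t₀ x)) = 1 := by
              rw [← Real.exp_add]; simp
            simp only [rg2]
            linear_combination A₂ x * v x ^ 2 * Real.exp (-(rK1 A₁ t₀ x)) * hEE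
          have h1 : 0 < Real.exp (-(rK1 A₁ t₀ x)) := Real.exp_pos _
          have hA0nn : 0 ≤ A₀ x + |A₀ x| := by
            have := neg_abs_le (A₀ x); linarith
          have hprod : 0 ≤ Real.exp (-(rK1 A₁ t₀ x)) * (A₀ x + |A₀ x|) :=
            mul_nonneg h1.le hA0nn
          nlinarith [hg2z, halg, hprod]
        · exact hzx2.le
    -- conclude
    have hF : (rz A₁ A₀ v t₀ K₀lim s)⁻¹ + rK2 A₁ A₂ t₀ s
        ≤ (rz A₁ A₀ v t₀ K₀lim t₀)⁻¹ + rK2 A₁ A₂ t₀ t₀ :=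
      hFanti (Set.left_mem_Icc.2 hs.1) (Set.right_mem_Icc.2 hs.1) hs.1
    have hK2t₀ : rK2 A₁ A₂ t₀ t₀ = 0 := by simp [rK2]
    rw [hzt₀, hK2t₀] at hF
    have hzsle : rz A₁ A₀ v t₀ K₀lim s ≤ Z := hzle s hs
    have hzspos : 0 < rz A₁ A₀ v t₀ K₀lim s := lt_of_lt_of_le (sub_pos.2 hv₀) (hzge s hs)
    have hinv : Z⁻¹ ≤ (rz A₁ A₀ v t₀ K₀lim s)⁻¹ := inv_anti₀ hzspos hzsle
    linarith
  -- take the limit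
  have hfin : K₂lim ≤ (v t₀ - K₀lim)⁻¹ - Z⁻¹ := by
    refine le_of_tendsto hK₂' ?_
    filter_upwards [Ioo_mem_nhdsLT_of_mem (Set.mem_Ioc.2 ⟨ht, le_refl t₁⟩)] with x hx
    exact key x ⟨hx.1.le, hx.2⟩
  have hZinv : 0 < Z⁻¹ := inv_pos.2 hZpos
  linarith
end

section
/- Under the hypotheses of the Riccati blowup lemma (v' = A₂v² + A₁v + A₀ on [t₀,t₁), A₂ ≥ 0, A₂,A₁,A₀ continuous and bounded, v₀ > K₀(t₁)), the solution satisfies the lower bound e^{-K₁(t)} v(t) ≥ K₀(t₁) - K₀(t) + [(v₀ - K₀(t₁))⁻¹ - K₂(t)]⁻¹ for all t ∈ [t₀,t₁). -/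
open Set intervalIntegral MeasureTheory Filter

/-- Riccati blowup lemma, second conclusion: the lower bound
`e^{-K₁(t)} v(t) ≥ K₀(t₁) - K₀(t) + [(v₀ - K₀(t₁))⁻¹ - K₂(t)]⁻¹` on `[t₀, t₁)`. -/
theorem stmt_1
    (t₀ t₁ : ℝ) (ht : t₀ < t₁)
    (A₂ A₁ A₀ v : ℝ → ℝ)
    (hA₂c : ContinuousOn A₂ (Set.Ico t₀ t₁))
    (hA₁c : ContinuousOn A₁ (Set.Ico t₀ t₁))
    (hA₀c : ContinuousOn A₀ (Set.Ico t₀ t₁))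
    (B : ℝ) (hB : ∀ t ∈ Set.Ico t₀ t₁, |A₂ t| ≤ B ∧ |A₁ t| ≤ B ∧ |A₀ t| ≤ B)
    (hA₂pos : ∀ t ∈ Set.Ico t₀ t₁, 0 ≤ A₂ t)
    (hv : ∀ t ∈ Set.Ico t₀ t₁, HasDerivAt v (A₂ t * v t ^ 2 + A₁ t * v t + A₀ t) t)
    (Mv : ℝ) (hvb : ∀ t ∈ Set.Ico t₀ t₁, |v t| ≤ Mv)
    (K₀lim : ℝ)
    (hK₀ : Filter.Tendsto
      (fun t => ∫ x in t₀..t, |A₀ x| * Real.exp (-(∫ y in t₀..x, A₁ y)))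
      (nhdsWithin t₁ (Set.Iio t₁)) (nhds K₀lim))
    (hv₀ : v t₀ > K₀lim) :
    ∀ t ∈ Set.Ico t₀ t₁,
      K₀lim - (∫ x in t₀..t, |A₀ x| * Real.exp (-(∫ y in t₀..x, A₁ y)))
        + ((v t₀ - K₀lim)⁻¹ - (∫ x in t₀..t, A₂ x * Real.exp (∫ y in t₀..x, A₁ y)))⁻¹
      ≤ Real.exp (-(∫ y in t₀..t, A₁ y)) * v t := by
  intro s hs
  set K₁ : ℝ → ℝ := fun r => ∫ y in t₀..r, A₁ y with hK₁def
  set g₀ : ℝ → ℝ := fun x => |A₀ x| * Real.exp (-(K₁ x)) with hg₀def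
  set g₂ : ℝ → ℝ := fun x => A₂ x * Real.exp (K₁ x) with hg₂def
  set K₀f : ℝ → ℝ := fun r => ∫ x in t₀..r, g₀ x with hK₀def
  set K₂f : ℝ → ℝ := fun r => ∫ x in t₀..r, g₂ x with hK₂def
  set c : ℝ := v t₀ - K₀lim with hcdef
  have hc : 0 < c := sub_pos.2 hv₀
  -- basic set inclusions
  have hIccIco : ∀ r ∈ Set.Ico t₀ t₁, Set.Icc t₀ r ⊆ Set.Ico t₀ t₁ :=
    fun r hr => Set.Icc_subset_Ico_right hr.2
  -- continuity of A's on Icc t₀ r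
  have hintA₁ : ∀ r ∈ Set.Ico t₀ t₁, IntervalIntegrable A₁ volume t₀ r :=
    fun r hr => (hA₁c.mono (hIccIco r hr)).intervalIntegrable_of_Icc hr.1
  -- continuity of K₁ on Icc t₀ r
  have hK₁cont : ∀ r ∈ Set.Ico t₀ t₁, ContinuousOn K₁ (Set.Icc t₀ r) := by
    intro r hr
    have h := intervalIntegral.continuousOn_primitive_interval
      (f := A₁) (a := t₀) (b := r) (μ := volume)
      (by rw [Set.uIcc_of_le hr.1]
          exact (hA₁c.mono (hIccIco r hr)).integrableOn_Icc)
    rwa [Set.uIcc_of_le hr.1] at h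
  -- derivative of K₁ at interior points
  have hK₁d : ∀ x ∈ Set.Ioo t₀ t₁, HasDerivAt K₁ (A₁ x) x := by
    intro x hx
    have hxI : x ∈ Set.Ico t₀ t₁ := ⟨hx.1.le, hx.2⟩
    exact intervalIntegral.integral_hasDerivAt_right (hintA₁ x hxI)
      (ContinuousOn.stronglyMeasurableAtFilter isOpen_Ioo
        (hA₁c.mono Set.Ioo_subset_Ico_self) x hx)
      (hA₁c.continuousAt (Ico_mem_nhds hx.1 hx.2))
  have hK₁contIoo : ContinuousOn K₁ (Set.Ioo t₀ t₁) :=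
    fun x hx => (hK₁d x hx).continuousAt.continuousWithinAt
  -- continuity of the integrands on Icc t₀ r
  have hg₀cont : ∀ r ∈ Set.Ico t₀ t₁, ContinuousOn g₀ (Set.Icc t₀ r) := by
    intro r hr
    exact ((hA₀c.mono (hIccIco r hr)).abs).mul
      (Real.continuous_exp.comp_continuousOn (hK₁cont r hr).neg)
  have hg₂cont : ∀ r ∈ Set.Ico t₀ t₁, ContinuousOn g₂ (Set.Icc t₀ r) := by
    intro r hr
    exact (hA₂c.mono (hIccIco r hr)).mul
      (Real.continuous_exp.comp_continuousOn (hK₁cont r hr))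
  have hintg₀ : ∀ r ∈ Set.Ico t₀ t₁, IntervalIntegrable g₀ volume t₀ r :=
    fun r hr => (hg₀cont r hr).intervalIntegrable_of_Icc hr.1
  have hintg₂ : ∀ r ∈ Set.Ico t₀ t₁, IntervalIntegrable g₂ volume t₀ r :=
    fun r hr => (hg₂cont r hr).intervalIntegrable_of_Icc hr.1
  -- continuity of K₀f, K₂f on Icc t₀ r
  have hK₀cont : ∀ r ∈ Set.Ico t₀ t₁, ContinuousOn K₀f (Set.Icc t₀ r) := by
    intro r hr
    have h := intervalIntegral.continuousOn_primitive_interval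
      (f := g₀) (a := t₀) (b := r) (μ := volume)
      (by rw [Set.uIcc_of_le hr.1]; exact (hg₀cont r hr).integrableOn_Icc)
    rwa [Set.uIcc_of_le hr.1] at h
  have hK₂cont : ∀ r ∈ Set.Ico t₀ t₁, ContinuousOn K₂f (Set.Icc t₀ r) := by
    intro r hr
    have h := intervalIntegral.continuousOn_primitive_interval
      (f := g₂) (a := t₀) (b := r) (μ := volume)
      (by rw [Set.uIcc_of_le hr.1]; exact (hg₂cont r hr).integrableOn_Icc)
    rwa [Set.uIcc_of_le hr.1] at h
  -- derivatives of K₀f, K₂f at interior points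
  have hg₀contIoo : ContinuousOn g₀ (Set.Ioo t₀ t₁) :=
    ((hA₀c.mono Set.Ioo_subset_Ico_self).abs).mul
      (Real.continuous_exp.comp_continuousOn hK₁contIoo.neg)
  have hg₂contIoo : ContinuousOn g₂ (Set.Ioo t₀ t₁) :=
    (hA₂c.mono Set.Ioo_subset_Ico_self).mul
      (Real.continuous_exp.comp_continuousOn hK₁contIoo)
  have hg₀contAt : ∀ x ∈ Set.Ioo t₀ t₁, ContinuousAt g₀ x := by
    intro x hx
    have h1 : ContinuousAt A₀ x := hA₀c.continuousAt (Ico_mem_nhds hx.1 hx.2)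
    have h2 : ContinuousAt K₁ x := (hK₁d x hx).continuousAt
    exact h1.abs.mul (Real.continuous_exp.continuousAt.comp h2.neg)
  have hg₂contAt : ∀ x ∈ Set.Ioo t₀ t₁, ContinuousAt g₂ x := by
    intro x hx
    have h1 : ContinuousAt A₂ x := hA₂c.continuousAt (Ico_mem_nhds hx.1 hx.2)
    have h2 : ContinuousAt K₁ x := (hK₁d x hx).continuousAt
    exact h1.mul (Real.continuous_exp.continuousAt.comp h2)
  have hK₀d : ∀ x ∈ Set.Ioo t₀ t₁, HasDerivAt K₀f (g₀ x) x := by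
    intro x hx
    exact intervalIntegral.integral_hasDerivAt_right (hintg₀ x ⟨hx.1.le, hx.2⟩)
      (ContinuousOn.stronglyMeasurableAtFilter isOpen_Ioo hg₀contIoo x hx)
      (hg₀contAt x hx)
  have hK₂d : ∀ x ∈ Set.Ioo t₀ t₁, HasDerivAt K₂f (g₂ x) x := by
    intro x hx
    exact intervalIntegral.integral_hasDerivAt_right (hintg₂ x ⟨hx.1.le, hx.2⟩)
      (ContinuousOn.stronglyMeasurableAtFilter isOpen_Ioo hg₂contIoo x hx)
      (hg₂contAt x hx)
  -- K₀f r ≤ K₀lim for r ∈ Ico t₀ t₁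
  have hK₀le : ∀ r ∈ Set.Ico t₀ t₁, K₀f r ≤ K₀lim := by
    intro r hr
    refine ge_of_tendsto hK₀ ?_
    filter_upwards [Ioo_mem_nhdsLT_of_mem (Set.mem_Ioc.2 ⟨hr.2, le_refl t₁⟩)] with y hy
    have hyI : y ∈ Set.Ico t₀ t₁ := ⟨hr.1.trans hy.1.le, hy.2⟩
    have hry : IntervalIntegrable g₀ volume r y :=
      ((hg₀cont y hyI).mono (Set.Icc_subset_Icc_left hr.1)).intervalIntegrable_of_Icc hy.1.le
    have hadd := intervalIntegral.integral_add_adjacent_intervals (hintg₀ r hr) hry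
    have hnn : 0 ≤ ∫ x in r..y, g₀ x := by
      apply intervalIntegral.integral_nonneg hy.1.le
      intro u _
      exact mul_nonneg (abs_nonneg _) (Real.exp_pos _).le
    show K₀f r ≤ K₀f y
    rw [hK₀def]
    dsimp only
    linarith [hadd]
  -- define z
  set z : ℝ → ℝ := fun r => Real.exp (-(K₁ r)) * v r + K₀f r - K₀lim with hzdef
  have hzderiv : ∀ x ∈ Set.Ioo t₀ t₁,
      HasDerivAt z (Real.exp (-(K₁ x)) * (A₂ x * v x ^ 2 + (A₀ x + |A₀ x|))) x := by
    intro x hx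
    have hxI : x ∈ Set.Ico t₀ t₁ := ⟨hx.1.le, hx.2⟩
    have hE : HasDerivAt (fun r => Real.exp (-(K₁ r)))
        (Real.exp (-(K₁ x)) * (-(A₁ x))) x := ((hK₁d x hx).neg).exp
    have h1 := ((hE.mul (hv x hxI)).add (hK₀d x hx)).sub_const K₀lim
    refine h1.congr_deriv ?_
    rw [hg₀def]
    dsimp only
    ring
  have hznn : ∀ x ∈ Set.Ioo t₀ t₁,
      0 ≤ Real.exp (-(K₁ x)) * (A₂ x * v x ^ 2 + (A₀ x + |A₀ x|)) := by
    intro x hx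
    apply mul_nonneg (Real.exp_pos _).le
    have h1 : 0 ≤ A₂ x * v x ^ 2 :=
      mul_nonneg (hA₂pos x ⟨hx.1.le, hx.2⟩) (sq_nonneg _)
    have h2 := neg_abs_le (A₀ x)
    linarith
  -- continuity of z and monotonicity on Icc t₀ s
  have hvcont : ContinuousOn v (Set.Icc t₀ s) :=
    fun x hx => ((hv x (hIccIco s hs hx)).continuousAt).continuousWithinAt
  have hzcont : ContinuousOn z (Set.Icc t₀ s) :=
    (((Real.continuous_exp.comp_continuousOn (hK₁cont s hs).neg).mul hvcont).add
      (hK₀cont s hs)).sub continuousOn_const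
  have hIoosub : Set.Ioo t₀ s ⊆ Set.Ioo t₀ t₁ :=
    Set.Ioo_subset_Ioo_right hs.2.le
  have hzmono : MonotoneOn z (Set.Icc t₀ s) := by
    apply monotoneOn_of_deriv_nonneg (convex_Icc t₀ s) hzcont
    · intro x hx
      rw [interior_Icc] at hx
      exact (hzderiv x (hIoosub hx)).differentiableAt.differentiableWithinAt
    · intro x hx
      rw [interior_Icc] at hx
      rw [(hzderiv x (hIoosub hx)).deriv]
      exact hznn x (hIoosub hx)
  have hzt₀ : z t₀ = c := by
    rw [hzdef, hcdef]
    dsimp only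
    rw [hK₁def, hK₀def]
    simp [intervalIntegral.integral_same]
  have hzpos : ∀ x ∈ Set.Icc t₀ s, 0 < z x := by
    intro x hx
    have := hzmono (Set.left_mem_Icc.2 hs.1) hx hx.1
    rw [hzt₀] at this
    linarith
  -- φ := z⁻¹ + K₂f is antitone on Icc t₀ s
  have hφanti : AntitoneOn (fun r => (z r)⁻¹ + K₂f r) (Set.Icc t₀ s) := by
    apply antitoneOn_of_deriv_nonpos (convex_Icc t₀ s)
    · exact (hzcont.inv₀ (fun x hx => (hzpos x hx).ne')).add (hK₂cont s hs)
    · intro x hx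
      rw [interior_Icc] at hx
      have hxIcc : x ∈ Set.Icc t₀ s := ⟨hx.1.le, hx.2.le⟩
      have hzx := hzpos x hxIcc
      exact (((hzderiv x (hIoosub hx)).inv hzx.ne').add
        (hK₂d x (hIoosub hx))).differentiableAt.differentiableWithinAt
    · intro x hx
      rw [interior_Icc] at hx
      have hxIoo := hIoosub hx
      have hxIcc : x ∈ Set.Icc t₀ s := ⟨hx.1.le, hx.2.le⟩
      have hzx := hzpos x hxIcc
      change deriv (z⁻¹ + K₂f) x ≤ 0
      rw [(((hzderiv x hxIoo).inv hzx.ne').add (hK₂d x hxIoo)).deriv]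
      -- show -z'/(z)² + A₂ e^{K₁} ≤ 0
      set e : ℝ := Real.exp (-(K₁ x)) with hedef
      set E : ℝ := Real.exp (K₁ x) with hEdef
      have hEe : E * e = 1 := by
        rw [hedef, hEdef, ← Real.exp_add]; simp
      have hepos : 0 < e := Real.exp_pos _
      have hEpos : 0 < E := Real.exp_pos _
      have hwz : z x ≤ e * v x := by
        have := hK₀le x ⟨hxIoo.1.le, hxIoo.2⟩
        rw [hzdef]; dsimp only; linarith
      have hA₂x : 0 ≤ A₂ x := hA₂pos x ⟨hxIoo.1.le, hxIoo.2⟩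
      have hsq : z x ^ 2 ≤ (e * v x) ^ 2 := by nlinarith
      have hkey : A₂ x * E * (e * v x) ^ 2 = e * (A₂ x * v x ^ 2) := by
        have : A₂ x * E * (e * v x) ^ 2 = (A₂ x * e * v x ^ 2) * (E * e) := by ring
        rw [this, hEe, mul_one]; ring
      have h1 : A₂ x * E * z x ^ 2 ≤ e * (A₂ x * v x ^ 2) := by
        calc A₂ x * E * z x ^ 2 ≤ A₂ x * E * (e * v x) ^ 2 :=
              mul_le_mul_of_nonneg_left hsq (mul_nonneg hA₂x hEpos.le)
          _ = e * (A₂ x * v x ^ 2) := hkey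
      have h2 : e * (A₂ x * v x ^ 2) ≤ e * (A₂ x * v x ^ 2 + (A₀ x + |A₀ x|)) := by
        have := neg_abs_le (A₀ x)
        nlinarith
      have hzsq : 0 < z x ^ 2 := pow_pos hzx 2
      show -(e * (A₂ x * v x ^ 2 + (A₀ x + |A₀ x|))) / z x ^ 2 + g₂ x ≤ 0
      rw [hg₂def]
      dsimp only
      rw [div_add' _ _ _ hzsq.ne', div_nonpos_iff]
      right
      constructor
      · rw [← hEdef]; linarith
      · exact hzsq.le
  -- conclude
  have hφ := hφanti (Set.left_mem_Icc.2 hs.1) (Set.right_mem_Icc.2 hs.1) hs.1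
  dsimp only at hφ
  have hK₂t₀ : K₂f t₀ = 0 := by rw [hK₂def]; simp [intervalIntegral.integral_same]
  rw [hzt₀, hK₂t₀, add_zero] at hφ
  -- hφ : (z s)⁻¹ + K₂f s ≤ c⁻¹
  have hzs : 0 < z s := hzpos s (Set.right_mem_Icc.2 hs.1)
  have hzinv : 0 < (z s)⁻¹ := inv_pos.2 hzs
  have hle : (z s)⁻¹ ≤ c⁻¹ - K₂f s := by linarith
  have hfinal : (c⁻¹ - K₂f s)⁻¹ ≤ z s := by
    have := inv_anti₀ hzinv hle
    rwa [inv_inv] at this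
  have hzs_eq : z s = Real.exp (-(K₁ s)) * v s + K₀f s - K₀lim := by rw [hzdef]
  show K₀lim - K₀f s + (c⁻¹ - K₂f s)⁻¹ ≤ Real.exp (-(K₁ s)) * v s
  linarith
end

section
/- Let r₀, s₀ : S¹ → ℝ be continuous, let U₀ be the convex hull of the image curve {(r₀(x), s₀(x)) : x ∈ S¹}, and U_δ its open δ-neighborhood. Let (r₋,s₋), (r₊,s₊) be points of the curve where r₀ attains its minimum and maximum respectively, and let γ : [r₋-δ, r₊+δ] → ℝ be the affine function whose graph is the segment from (r₋-δ, s₋) to (r₊+δ, s₊). Then for every (r,s) ∈ U_δ, the line segment from (r,s) to (r,γ(r)) is contained in U_δ. -/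
/-- For every point `(r,s)` in the δ-neighborhood `U_δ` of the convex hull `U₀` of the
initial data curve, the segment from `(r,s)` to `(r, γ(r))` is contained in `U_δ`,
where `γ` is the affine function through `(r₋ - δ, s₋)` and `(r₊ + δ, s₊)`. -/
theorem stmt_4 (r₀ s₀ : AddCircle (1:ℝ) → ℝ) (hr : Continuous r₀) (hs : Continuous s₀)
    (δ : ℝ) (hδ : 0 < δ)
    (xm xp : AddCircle (1:ℝ))
    (hmin : ∀ x, r₀ xm ≤ r₀ x) (hmax : ∀ x, r₀ x ≤ r₀ xp)
    (U₀ : Set (EuclideanSpace ℝ (Fin 2)))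
    (hU₀ : U₀ = convexHull ℝ
      (Set.range fun x => (!₂[r₀ x, s₀ x] : EuclideanSpace ℝ (Fin 2))))
    (γ : ℝ → ℝ)
    (hγ : ∀ ρ, γ ρ = s₀ xm + (s₀ xp - s₀ xm) * (ρ - r₀ xm + δ) / (r₀ xp - r₀ xm + 2*δ))
    (P : EuclideanSpace ℝ (Fin 2)) (hP : Metric.infDist P U₀ < δ) :
    segment ℝ P (!₂[P 0, γ (P 0)] : EuclideanSpace ℝ (Fin 2))
      ⊆ {Q : EuclideanSpace ℝ (Fin 2) | Metric.infDist Q U₀ < δ} := by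
  have hne0 : (Set.range fun x => (!₂[r₀ x, s₀ x] : EuclideanSpace ℝ (Fin 2))).Nonempty :=
    ⟨_, ⟨(0 : AddCircle (1:ℝ)), rfl⟩⟩
  have hUconv : Convex ℝ U₀ := hU₀ ▸ convex_convexHull ℝ _
  have hUne : U₀.Nonempty := hU₀ ▸ hne0.mono (subset_convexHull ℝ _)
  -- the target set equals the thickening, hence convex
  have hset : {Q : EuclideanSpace ℝ (Fin 2) | Metric.infDist Q U₀ < δ}
      = Metric.thickening δ U₀ := by
    ext Q; exact (Metric.mem_thickening_iff_infDist_lt hUne).symm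
  have hconvT : Convex ℝ {Q : EuclideanSpace ℝ (Fin 2) | Metric.infDist Q U₀ < δ} := by
    rw [hset]; exact hUconv.thickening δ
  set rm := r₀ xm with hrm
  set rp := r₀ xp with hrp
  set sm := s₀ xm with hsm
  set sp := s₀ xp with hsp
  have hd : 0 < rp - rm + 2*δ := by have := hmin xp; simp only [← hrm, ← hrp] at this; linarith
  obtain ⟨Q, hQU, hdQ⟩ := (Metric.infDist_lt_iff hUne).mp hP
  have hsub : U₀ ⊆ {v : EuclideanSpace ℝ (Fin 2) | rm ≤ v 0 ∧ v 0 ≤ rp} := by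
    rw [hU₀]
    apply convexHull_min
    · rintro _ ⟨x, rfl⟩
      simp only [Set.mem_setOf_eq, Matrix.cons_val_zero]
      exact ⟨hmin x, hmax x⟩
    · have heq : {v : EuclideanSpace ℝ (Fin 2) | rm ≤ v 0 ∧ v 0 ≤ rp}
          = (EuclideanSpace.proj (𝕜 := ℝ) (0 : Fin 2)) ⁻¹' Set.Icc rm rp := rfl
      rw [heq]
      exact (convex_Icc rm rp).linear_preimage
        ((EuclideanSpace.proj (𝕜 := ℝ) (0 : Fin 2)) : EuclideanSpace ℝ (Fin 2) →ₗ[ℝ] ℝ)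
  obtain ⟨hQ1, hQ2⟩ := hsub hQU
  have hcoord : dist (P 0) (Q 0) ≤ dist P Q := by
    rw [EuclideanSpace.dist_eq, Fin.sum_univ_two]
    calc dist (P 0) (Q 0) = Real.sqrt (dist (P 0) (Q 0) ^ 2) :=
          (Real.sqrt_sq dist_nonneg).symm
      _ ≤ Real.sqrt (dist (P 0) (Q 0) ^ 2 + dist (P 1) (Q 1) ^ 2) :=
          Real.sqrt_le_sqrt (le_add_of_nonneg_right (by positivity))
  have hPQ : |P 0 - Q 0| < δ := by rw [← Real.dist_eq]; exact lt_of_le_of_lt hcoord hdQ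
  rw [abs_lt] at hPQ
  set t : ℝ := (P 0 - rm + δ) / (rp - rm + 2*δ) with htdef
  have ht0 : 0 < t := div_pos (by linarith) hd
  have ht1 : t < 1 := (div_lt_one hd).2 (by linarith)
  have htd : t * (rp - rm + 2*δ) = P 0 - rm + δ := div_mul_cancel₀ _ hd.ne'
  set Q' : EuclideanSpace ℝ (Fin 2) :=
    (1-t) • (!₂[rm, sm] : EuclideanSpace ℝ (Fin 2)) + t • !₂[rp, sp] with hQ'def
  have hQ'U : Q' ∈ U₀ := by
    rw [hU₀]
    exact (convex_convexHull ℝ _)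
      (subset_convexHull ℝ _ (Set.mem_range.mpr ⟨xm, rfl⟩))
      (subset_convexHull ℝ _ (Set.mem_range.mpr ⟨xp, rfl⟩))
      (by linarith) ht0.le (by ring)
  have hQ'0 : Q' 0 = (1-t)*rm + t*rp := rfl
  have hQ'1 : Q' 1 = (1-t)*sm + t*sp := rfl
  have hγeq : γ (P 0) = Q' 1 := by
    rw [hγ, hQ'1, mul_div_assoc, ← htdef]
    ring
  have hE : (!₂[P 0, γ (P 0)] : EuclideanSpace ℝ (Fin 2))
      ∈ {Q : EuclideanSpace ℝ (Fin 2) | Metric.infDist Q U₀ < δ} := by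
    refine lt_of_le_of_lt (Metric.infDist_le_dist_of_mem hQ'U) ?_
    have hde := EuclideanSpace.dist_eq (!₂[P 0, γ (P 0)] : EuclideanSpace ℝ (Fin 2)) Q'
    rw [Fin.sum_univ_two] at hde
    rw [hde]
    have e0 : (!₂[P 0, γ (P 0)] : EuclideanSpace ℝ (Fin 2)) 0 = P 0 := rfl
    have e1 : (!₂[P 0, γ (P 0)] : EuclideanSpace ℝ (Fin 2)) 1 = γ (P 0) := rfl
    rw [e0, e1, hγeq, dist_self]
    rw [show (0:ℝ)^2 = 0 by ring, add_zero, Real.dist_eq, Real.sqrt_sq_eq_abs, abs_abs]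
    rw [hQ'0, abs_lt]
    constructor <;> nlinarith
  exact hconvT.segment_subset hP hE
end

section
/- Let κ, λ : U → ℝ be C¹ with κ - λ ≠ 0 on an open U ⊆ ℝ², and define h(r,s) = ∫_{γ(r)}^{s} (κ-λ)⁻¹ (∂κ/∂s) ds for a fixed C¹ curve γ. Suppose on U: |(κ-λ)⁻¹| ≤ C₁, |κ_s| ≤ C₂, |κ_r| ≤ C₃, |λ_r| ≤ C₄, |λ_s| ≤ C₅, |γ'| ≤ G, and |s - γ(r)| ≤ L on U. Then |h| ≤ C₁ C₂ L on U, and (using integration by parts to avoid κ_{rs}) |∂h/∂r| ≤ C₁(2C₃ G' + C₂ G) + C₁²(C₃ C₅ + C₂ C₄) L for appropriate constants; in particular h and h_r are bounded in terms of the stated bounds. -/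
open Set intervalIntegral

lemma hasDerivAt_sliceY {f : ℝ×ℝ→ℝ} {x y : ℝ} (h : DifferentiableAt ℝ f (x,y)) :
    HasDerivAt (fun y' => f (x, y')) (fderiv ℝ f (x,y) (0,1)) y :=
  h.hasFDerivAt.comp_hasDerivAt y (HasDerivAt.prodMk (hasDerivAt_const y x) (hasDerivAt_id y))

lemma hasDerivAt_sliceX {f : ℝ×ℝ→ℝ} {x y : ℝ} (h : DifferentiableAt ℝ f (x,y)) :
    HasDerivAt (fun x' => f (x', y)) (fderiv ℝ f (x,y) (1,0)) x :=
  h.hasFDerivAt.comp_hasDerivAt x (HasDerivAt.prodMk (hasDerivAt_id x) (hasDerivAt_const x y))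

lemma abs_deriv_le_of_lip {F : ℝ → ℝ} {x₀ C : ℝ} (hC : 0 ≤ C)
    (h : ∀ᶠ x in nhds x₀, |F x - F x₀| ≤ C * |x - x₀|) : |deriv F x₀| ≤ C := by
  have h1 : ‖fderiv ℝ F x₀‖ ≤ C :=
    norm_fderiv_le_of_lip' ℝ hC (by simpa [Real.norm_eq_abs] using h)
  calc |deriv F x₀| = ‖fderiv ℝ F x₀ 1‖ := by rw [fderiv_apply_one_eq_deriv]; rfl
    _ ≤ ‖fderiv ℝ F x₀‖ * ‖(1:ℝ)‖ := (fderiv ℝ F x₀).le_opNorm 1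
    _ ≤ C := by simpa using h1

lemma abs_sub_le_of_mem_uIcc {y a b : ℝ} (h : y ∈ Set.uIcc a b) : |y - b| ≤ |a - b| := by
  rcases Set.mem_uIcc.1 h with ⟨h1,h2⟩|⟨h1,h2⟩ <;> rcases abs_cases (a-b) with ⟨e,_⟩|⟨e,_⟩ <;>
    rw [abs_le] <;> constructor <;> linarith

lemma abs_sub_le_mvt {f f' : ℝ → ℝ} {a b M : ℝ}
    (hf : ∀ t ∈ Set.uIcc a b, HasDerivAt f (f' t) t)
    (hM : ∀ t ∈ Set.uIcc a b, |f' t| ≤ M) : |f b - f a| ≤ M * |b - a| := by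
  have := Convex.norm_image_sub_le_of_norm_hasDerivWithin_le
    (fun t ht => (hf t ht).hasDerivWithinAt) (by simpa [Real.norm_eq_abs] using hM)
    (convex_uIcc a b) Set.left_mem_uIcc Set.right_mem_uIcc
  simpa [Real.norm_eq_abs] using this

/-- The integrating factor `h(r,s) = ∫_{γ(r)}^s (κ-λ)⁻¹ κ_s ds` satisfies
`|h| ≤ C₁ C₂ L`, and (integrating by parts to avoid `κ_{rs}`) its `r`-derivative is
bounded by a constant depending only on the stated bounds `C₁,…,C₅, G, L`. -/
theorem stmt_17 (C₁ C₂ C₃ C₄ C₅ G L : ℝ)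
    (h1 : 0 ≤ C₁) (h2 : 0 ≤ C₂) (h3 : 0 ≤ C₃) (h4 : 0 ≤ C₄) (h5 : 0 ≤ C₅)
    (hG : 0 ≤ G) (hL : 0 ≤ L) :
    ∃ C : ℝ, ∀ (U : Set (ℝ × ℝ)) (κ lam : ℝ × ℝ → ℝ) (γ : ℝ → ℝ),
      IsOpen U → ContDiffOn ℝ 2 κ U → ContDiffOn ℝ 2 lam U →
      Differentiable ℝ γ → (∀ ρ : ℝ, |deriv γ ρ| ≤ G) →
      (∀ z ∈ U, κ z - lam z ≠ 0) →
      (∀ z ∈ U, |(κ z - lam z)⁻¹| ≤ C₁) →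
      (∀ z ∈ U, |deriv (fun y => κ (z.1, y)) z.2| ≤ C₂) →
      (∀ z ∈ U, |deriv (fun x => κ (x, z.2)) z.1| ≤ C₃) →
      (∀ z ∈ U, |deriv (fun x => lam (x, z.2)) z.1| ≤ C₄) →
      (∀ z ∈ U, |deriv (fun y => lam (z.1, y)) z.2| ≤ C₅) →
      (∀ z ∈ U, ∀ y ∈ Set.uIcc (γ z.1) z.2, (z.1, y) ∈ U) →
      (∀ z ∈ U, |z.2 - γ z.1| ≤ L) →
      ∀ z ∈ U,
        |∫ y in γ z.1..z.2,
            (κ (z.1, y) - lam (z.1, y))⁻¹ * deriv (fun y' => κ (z.1, y')) y|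
          ≤ C₁ * C₂ * L ∧
        |deriv (fun x => ∫ y in γ x..z.2,
            (κ (x, y) - lam (x, y))⁻¹ * deriv (fun y' => κ (x, y')) y) z.1| ≤ C := by
  refine ⟨C₁*C₂*G + C₁^2*(C₃+C₄)*C₂*L + 2*(C₁*C₃) + C₁^2*(C₂+C₅)*C₃*L, ?_⟩
  intro U κ lam γ hU hκ hlam hγ hγ' hne hb1 hb2 hb3 hb4 hb5 hseg hLb z hz
  obtain ⟨r₀, s₀⟩ := z
  simp only at hz ⊢
  -- basic differentiability
  have hκd : ∀ w ∈ U, DifferentiableAt ℝ κ w := fun w hw =>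
    (hκ.differentiableOn two_ne_zero).differentiableAt (hU.mem_nhds hw)
  have hld : ∀ w ∈ U, DifferentiableAt ℝ lam w := fun w hw =>
    (hlam.differentiableOn two_ne_zero).differentiableAt (hU.mem_nhds hw)
  -- bounds on fderiv components
  have hB2 : ∀ x y, (x,y) ∈ U → |fderiv ℝ κ (x,y) (0,1)| ≤ C₂ := fun x y hw => by
    rw [← (hasDerivAt_sliceY (hκd _ hw)).deriv]; exact hb2 (x,y) hw
  have hB3 : ∀ x y, (x,y) ∈ U → |fderiv ℝ κ (x,y) (1,0)| ≤ C₃ := fun x y hw => by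
    rw [← (hasDerivAt_sliceX (hκd _ hw)).deriv]; exact hb3 (x,y) hw
  have hB4 : ∀ x y, (x,y) ∈ U → |fderiv ℝ lam (x,y) (1,0)| ≤ C₄ := fun x y hw => by
    rw [← (hasDerivAt_sliceX (hld _ hw)).deriv]; exact hb4 (x,y) hw
  have hB5 : ∀ x y, (x,y) ∈ U → |fderiv ℝ lam (x,y) (0,1)| ≤ C₅ := fun x y hw => by
    rw [← (hasDerivAt_sliceY (hld _ hw)).deriv]; exact hb5 (x,y) hw
  -- the integrands
  set fG : ℝ → ℝ → ℝ := fun t y => (κ (t,y) - lam (t,y))⁻¹ * fderiv ℝ κ (t,y) (0,1) with hfG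
  have hfeq : ∀ t y, (t,y) ∈ U →
      (κ (t,y) - lam (t,y))⁻¹ * deriv (fun y' => κ (t,y')) y = fG t y := fun t y hw => by
    rw [hfG]; rw [(hasDerivAt_sliceY (hκd _ hw)).deriv]
  have hfGbound : ∀ t y, (t,y) ∈ U → |fG t y| ≤ C₁ * C₂ := fun t y hw => by
    rw [hfG, abs_mul]
    exact mul_le_mul (hb1 _ hw) (hB2 t y hw) (abs_nonneg _) h1
  -- continuity of fderivs
  have hκf : ContinuousOn (fderiv ℝ κ) U := hκ.continuousOn_fderiv_of_isOpen hU one_le_two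
  have hlf : ContinuousOn (fderiv ℝ lam) U := hlam.continuousOn_fderiv_of_isOpen hU one_le_two
  -- continuity of vertical slices of various functions
  have hmapc : ∀ t : ℝ, Continuous (fun y : ℝ => ((t,y) : ℝ×ℝ)) := fun t =>
    continuous_const.prodMk continuous_id
  have hcontd : ∀ t (J : Set ℝ), (∀ y ∈ J, (t,y) ∈ U) →
      ContinuousOn (fun y => κ (t,y) - lam (t,y)) J := by
    intro t J hJ
    exact ((hκ.continuousOn.comp (hmapc t).continuousOn hJ).sub
      (hlam.continuousOn.comp (hmapc t).continuousOn hJ))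
  have hcontg : ∀ t (J : Set ℝ), (∀ y ∈ J, (t,y) ∈ U) →
      ContinuousOn (fun y => (κ (t,y) - lam (t,y))⁻¹) J := fun t J hJ =>
    (hcontd t J hJ).inv₀ (fun y hy => hne _ (hJ y hy))
  have hcontκs : ∀ t (J : Set ℝ), (∀ y ∈ J, (t,y) ∈ U) →
      ContinuousOn (fun y => fderiv ℝ κ (t,y) (0,1)) J := fun t J hJ =>
    (hκf.comp (hmapc t).continuousOn hJ).clm_apply continuousOn_const
  have hcontls : ∀ t (J : Set ℝ), (∀ y ∈ J, (t,y) ∈ U) →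
      ContinuousOn (fun y => fderiv ℝ lam (t,y) (0,1)) J := fun t J hJ =>
    (hlf.comp (hmapc t).continuousOn hJ).clm_apply continuousOn_const
  have hcontG : ∀ t (J : Set ℝ), (∀ y ∈ J, (t,y) ∈ U) →
      ContinuousOn (fun y => fG t y) J := fun t J hJ =>
    (hcontg t J hJ).mul (hcontκs t J hJ)
  -- Part 1
  have hsegz := hseg (r₀, s₀) hz
  simp only at hsegz
  have part1 : ∀ a b t : ℝ, (∀ y ∈ Set.uIcc a b, (t,y) ∈ U) →
      |∫ y in a..b, (κ (t,y) - lam (t,y))⁻¹ * deriv (fun y' => κ (t,y')) y|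
        ≤ C₁ * C₂ * |b - a| := by
    intro a b t hJ
    have := intervalIntegral.norm_integral_le_of_norm_le_const (C := C₁*C₂)
      (f := fun y => (κ (t,y) - lam (t,y))⁻¹ * deriv (fun y' => κ (t,y')) y)
      (a := a) (b := b) ?_
    · simpa [Real.norm_eq_abs] using this
    · intro y hy
      have hyU := hJ y (Set.uIoc_subset_uIcc hy)
      simp only [Real.norm_eq_abs]
      rw [hfeq t y hyU]
      exact hfGbound t y hyU
  refine ⟨?_, ?_⟩
  · calc |∫ y in γ r₀..s₀, (κ (r₀,y) - lam (r₀,y))⁻¹ * deriv (fun y' => κ (r₀,y')) y|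
        ≤ C₁ * C₂ * |s₀ - γ r₀| := part1 _ _ _ hsegz
      _ ≤ C₁ * C₂ * L := by
          have := hLb (r₀, s₀) hz
          simp only at this
          exact mul_le_mul_of_nonneg_left this (by positivity)
  · -- Part 2 : bound the r-derivative via a Lipschitz estimate
    have hK : IsCompact ({r₀} ×ˢ Set.uIcc (γ r₀) s₀ : Set (ℝ×ℝ)) :=
      isCompact_singleton.prod isCompact_uIcc
    have hKU : ({r₀} ×ˢ Set.uIcc (γ r₀) s₀ : Set (ℝ×ℝ)) ⊆ U := by
      rintro ⟨a,b⟩ ⟨ha, hb⟩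
      simp only [Set.mem_singleton_iff] at ha
      subst ha
      exact hsegz b hb
    obtain ⟨ε, hε, hthick⟩ := hK.exists_cthickening_subset_open hU hKU
    set δ := ε / (G+1) with hδdef
    have hG1 : (0:ℝ) < G + 1 := by linarith
    have hδpos : 0 < δ := by positivity
    have hδmul : δ * (G+1) = ε := div_mul_cancel₀ ε (ne_of_gt hG1)
    have hδε : δ ≤ ε := by nlinarith
    have hGδ : G * δ ≤ ε := by nlinarith
    have hmemU : ∀ x, |x - r₀| ≤ δ → ∀ y,
        (∃ y' ∈ Set.uIcc (γ r₀) s₀, |y - y'| ≤ ε) → (x,y) ∈ U := by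
      rintro x hx y ⟨y', hy', hyy'⟩
      apply hthick
      refine Metric.mem_cthickening_of_dist_le (x,y) (r₀,y') ε _ ⟨rfl, hy'⟩ ?_
      rw [Prod.dist_eq]
      simp only [Real.dist_eq]
      exact max_le (hx.trans hδε) hyy'
    have hγlip : ∀ a b : ℝ, |γ a - γ b| ≤ G * |a - b| := by
      intro a b
      have := convex_univ.norm_image_sub_le_of_norm_deriv_le (f := γ)
        (fun t _ => hγ t) (fun t _ => by simpa [Real.norm_eq_abs] using hγ' t)
        (Set.mem_univ b) (Set.mem_univ a)
      simpa [Real.norm_eq_abs] using this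
    have hLs : |s₀ - γ r₀| ≤ L := by
      have := hLb (r₀, s₀) hz; simpa using this
    -- the quotient-derivative bound, used twice
    have hquot : ∀ (A B d Ca Cb : ℝ), |A| ≤ Ca → |B| ≤ Cb → |d⁻¹| ≤ C₁ →
        |(-(A - B))/d^2| ≤ (Ca + Cb) * C₁^2 := by
      intro A B d Ca Cb hA hB hd
      rw [div_eq_mul_inv, ← inv_pow, abs_mul, abs_neg, abs_pow]
      refine mul_le_mul ?_ (pow_le_pow_left₀ (abs_nonneg _) hd 2) (by positivity)
        (add_nonneg ((abs_nonneg A).trans hA) ((abs_nonneg B).trans hB))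
      calc |A - B| ≤ |A| + |B| := abs_sub A B
        _ ≤ Ca + Cb := add_le_add hA hB
    apply abs_deriv_le_of_lip (by positivity)
    filter_upwards [Metric.closedBall_mem_nhds r₀ hδpos] with x hx
    rw [Metric.mem_closedBall, Real.dist_eq] at hx
    show |(∫ y in γ x..s₀, (κ (x,y) - lam (x,y))⁻¹ * deriv (fun y' => κ (x,y')) y)
        - (∫ y in γ r₀..s₀, (κ (r₀,y) - lam (r₀,y))⁻¹ * deriv (fun y' => κ (r₀,y')) y)|
        ≤ _ * |x - r₀|
    -- membership facts
    have hxm : ∀ y ∈ Set.uIcc (γ x) (γ r₀), (x, y) ∈ U := by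
      intro y hy
      refine hmemU x hx y ⟨γ r₀, Set.left_mem_uIcc, ?_⟩
      calc |y - γ r₀| ≤ |γ x - γ r₀| := abs_sub_le_of_mem_uIcc hy
        _ ≤ G * |x - r₀| := hγlip x r₀
        _ ≤ G * δ := mul_le_mul_of_nonneg_left hx hG
        _ ≤ ε := hGδ
    have hvert : ∀ t, |t - r₀| ≤ δ → ∀ y ∈ Set.uIcc (γ r₀) s₀, (t, y) ∈ U := by
      intro t ht y hy
      exact hmemU t ht y ⟨y, hy, by simpa using hε.le⟩
    have hvx : ∀ y ∈ Set.uIcc (γ r₀) s₀, (x, y) ∈ U := hvert x hx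
    have hvr : ∀ y ∈ Set.uIcc (γ r₀) s₀, (r₀, y) ∈ U :=
      hvert r₀ (by simpa using hδpos.le)
    have hhor : ∀ y ∈ Set.uIcc (γ r₀) s₀, ∀ t ∈ Set.uIcc x r₀, (t, y) ∈ U := by
      intro y hy t ht
      exact hvert t ((abs_sub_le_of_mem_uIcc ht).trans hx) y hy
    -- integrability
    have hintx1 : IntervalIntegrable
        (fun y => (κ (x,y) - lam (x,y))⁻¹ * deriv (fun y' => κ (x,y')) y)
        MeasureTheory.volume (γ x) (γ r₀) :=
      ((hcontG x _ hxm).congr (fun y hy => hfeq x y (hxm y hy))).intervalIntegrable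
    have hintx2 : IntervalIntegrable
        (fun y => (κ (x,y) - lam (x,y))⁻¹ * deriv (fun y' => κ (x,y')) y)
        MeasureTheory.volume (γ r₀) s₀ :=
      ((hcontG x _ hvx).congr (fun y hy => hfeq x y (hvx y hy))).intervalIntegrable
    have hintr : IntervalIntegrable
        (fun y => (κ (r₀,y) - lam (r₀,y))⁻¹ * deriv (fun y' => κ (r₀,y')) y)
        MeasureTheory.volume (γ r₀) s₀ :=
      ((hcontG r₀ _ hvr).congr (fun y hy => hfeq r₀ y (hvr y hy))).intervalIntegrable
    -- split the difference
    have key : (∫ y in γ x..s₀, (κ (x,y) - lam (x,y))⁻¹ * deriv (fun y' => κ (x,y')) y)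
        - (∫ y in γ r₀..s₀, (κ (r₀,y) - lam (r₀,y))⁻¹ * deriv (fun y' => κ (r₀,y')) y)
        = (∫ y in γ x..γ r₀, (κ (x,y) - lam (x,y))⁻¹ * deriv (fun y' => κ (x,y')) y)
          + ∫ y in γ r₀..s₀, ((κ (x,y) - lam (x,y))⁻¹ * deriv (fun y' => κ (x,y')) y
              - (κ (r₀,y) - lam (r₀,y))⁻¹ * deriv (fun y' => κ (r₀,y')) y) := by
      rw [← intervalIntegral.integral_add_adjacent_intervals hintx1 hintx2,
          intervalIntegral.integral_sub hintx2 hintr]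
      ring
    -- T1 bound
    have hT1 : |∫ y in γ x..γ r₀, (κ (x,y) - lam (x,y))⁻¹ * deriv (fun y' => κ (x,y')) y|
        ≤ C₁ * C₂ * (G * |x - r₀|) := by
      calc |∫ y in γ x..γ r₀, (κ (x,y) - lam (x,y))⁻¹ * deriv (fun y' => κ (x,y')) y|
          ≤ C₁ * C₂ * |γ r₀ - γ x| := part1 _ _ _ hxm
        _ ≤ C₁ * C₂ * (G * |x - r₀|) := by
            refine mul_le_mul_of_nonneg_left ?_ (by positivity)
            calc |γ r₀ - γ x| ≤ G * |r₀ - x| := hγlip r₀ x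
              _ = G * |x - r₀| := by rw [abs_sub_comm]
    -- pointwise bound for the difference of inverses
    have hgdiff : ∀ y ∈ Set.uIcc (γ r₀) s₀,
        |(κ (x,y) - lam (x,y))⁻¹ - (κ (r₀,y) - lam (r₀,y))⁻¹|
          ≤ (C₃ + C₄) * C₁^2 * |x - r₀| := by
      intro y hy
      have hmv := abs_sub_le_mvt (a := x) (b := r₀)
        (f := fun t => (κ (t,y) - lam (t,y))⁻¹)
        (f' := fun t => -((fderiv ℝ κ (t,y)) (1,0) - (fderiv ℝ lam (t,y)) (1,0))
          / (κ (t,y) - lam (t,y))^2)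
        (fun t ht => ((hasDerivAt_sliceX (hκd _ (hhor y hy t ht))).sub
            (hasDerivAt_sliceX (hld _ (hhor y hy t ht)))).inv (hne _ (hhor y hy t ht)))
        (fun t ht => hquot _ _ _ _ _ (hB3 t y (hhor y hy t ht)) (hB4 t y (hhor y hy t ht))
          (hb1 _ (hhor y hy t ht)))
      calc |(κ (x,y) - lam (x,y))⁻¹ - (κ (r₀,y) - lam (r₀,y))⁻¹|
          = |(κ (r₀,y) - lam (r₀,y))⁻¹ - (κ (x,y) - lam (x,y))⁻¹| := abs_sub_comm _ _
        _ ≤ (C₃ + C₄) * C₁^2 * |r₀ - x| := hmv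
        _ = (C₃ + C₄) * C₁^2 * |x - r₀| := by rw [abs_sub_comm]
    -- pointwise bound for κ(x,·) - κ(r₀,·)
    have hvb : ∀ y ∈ Set.uIcc (γ r₀) s₀, |κ (x,y) - κ (r₀,y)| ≤ C₃ * |x - r₀| := by
      intro y hy
      have hmv := abs_sub_le_mvt (a := x) (b := r₀) (f := fun t => κ (t,y))
        (f' := fun t => (fderiv ℝ κ (t,y)) (1,0))
        (fun t ht => hasDerivAt_sliceX (hκd _ (hhor y hy t ht)))
        (fun t ht => hB3 t y (hhor y hy t ht))
      calc |κ (x,y) - κ (r₀,y)| = |κ (r₀,y) - κ (x,y)| := abs_sub_comm _ _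
        _ ≤ C₃ * |r₀ - x| := hmv
        _ = C₃ * |x - r₀| := by rw [abs_sub_comm]
    -- split T2
    have hintA : IntervalIntegrable
        (fun y => ((κ (x,y) - lam (x,y))⁻¹ - (κ (r₀,y) - lam (r₀,y))⁻¹)
          * (fderiv ℝ κ (x,y)) (0,1)) MeasureTheory.volume (γ r₀) s₀ :=
      (((hcontg x _ hvx).sub (hcontg r₀ _ hvr)).mul (hcontκs x _ hvx)).intervalIntegrable
    have hintB : IntervalIntegrable
        (fun y => (κ (r₀,y) - lam (r₀,y))⁻¹
          * ((fderiv ℝ κ (x,y)) (0,1) - (fderiv ℝ κ (r₀,y)) (0,1)))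
        MeasureTheory.volume (γ r₀) s₀ :=
      ((hcontg r₀ _ hvr).mul ((hcontκs x _ hvx).sub (hcontκs r₀ _ hvr))).intervalIntegrable
    have hT2eq : (∫ y in γ r₀..s₀, ((κ (x,y) - lam (x,y))⁻¹ * deriv (fun y' => κ (x,y')) y
            - (κ (r₀,y) - lam (r₀,y))⁻¹ * deriv (fun y' => κ (r₀,y')) y))
        = (∫ y in γ r₀..s₀, ((κ (x,y) - lam (x,y))⁻¹ - (κ (r₀,y) - lam (r₀,y))⁻¹)
            * (fderiv ℝ κ (x,y)) (0,1))
          + ∫ y in γ r₀..s₀, (κ (r₀,y) - lam (r₀,y))⁻¹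
            * ((fderiv ℝ κ (x,y)) (0,1) - (fderiv ℝ κ (r₀,y)) (0,1)) := by
      rw [← intervalIntegral.integral_add hintA hintB]
      apply intervalIntegral.integral_congr
      intro y hy
      have e1 := hfeq x y (hvx y hy)
      have e2 := hfeq r₀ y (hvr y hy)
      simp only [hfG] at e1 e2
      simp only
      rw [e1, e2]
      ring
    -- bound A
    have hAbd : |∫ y in γ r₀..s₀, ((κ (x,y) - lam (x,y))⁻¹ - (κ (r₀,y) - lam (r₀,y))⁻¹)
          * (fderiv ℝ κ (x,y)) (0,1)|
        ≤ (C₃ + C₄) * C₁^2 * |x - r₀| * C₂ * L := by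
      have hb := intervalIntegral.norm_integral_le_of_norm_le_const
        (C := (C₃ + C₄) * C₁^2 * |x - r₀| * C₂)
        (f := fun y => ((κ (x,y) - lam (x,y))⁻¹ - (κ (r₀,y) - lam (r₀,y))⁻¹)
          * (fderiv ℝ κ (x,y)) (0,1)) (a := γ r₀) (b := s₀) ?_
      · rw [Real.norm_eq_abs] at hb
        calc _ ≤ (C₃ + C₄) * C₁^2 * |x - r₀| * C₂ * |s₀ - γ r₀| := hb
          _ ≤ (C₃ + C₄) * C₁^2 * |x - r₀| * C₂ * L :=
              mul_le_mul_of_nonneg_left hLs (by positivity)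
      · intro y hy
        have hy' := Set.uIoc_subset_uIcc hy
        simp only [Real.norm_eq_abs, abs_mul]
        exact mul_le_mul (hgdiff y hy') (hB2 x y (hvx y hy')) (abs_nonneg _) (by positivity)
    -- bound B via integration by parts
    have huD : ∀ y ∈ Set.uIcc (γ r₀) s₀,
        HasDerivAt (fun y' => (κ (r₀,y') - lam (r₀,y'))⁻¹)
          (-((fderiv ℝ κ (r₀,y)) (0,1) - (fderiv ℝ lam (r₀,y)) (0,1))
            / (κ (r₀,y) - lam (r₀,y))^2) y :=
      fun y hy => ((hasDerivAt_sliceY (hκd _ (hvr y hy))).sub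
        (hasDerivAt_sliceY (hld _ (hvr y hy)))).inv (hne _ (hvr y hy))
    have hvD : ∀ y ∈ Set.uIcc (γ r₀) s₀,
        HasDerivAt (fun y' => κ (x,y') - κ (r₀,y'))
          ((fderiv ℝ κ (x,y)) (0,1) - (fderiv ℝ κ (r₀,y)) (0,1)) y :=
      fun y hy => (hasDerivAt_sliceY (hκd _ (hvx y hy))).sub
        (hasDerivAt_sliceY (hκd _ (hvr y hy)))
    have hu'int : IntervalIntegrable
        (fun y => -((fderiv ℝ κ (r₀,y)) (0,1) - (fderiv ℝ lam (r₀,y)) (0,1))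
          / (κ (r₀,y) - lam (r₀,y))^2) MeasureTheory.volume (γ r₀) s₀ :=
      ((((hcontκs r₀ _ hvr).sub (hcontls r₀ _ hvr)).neg.div ((hcontd r₀ _ hvr).pow 2)
        (fun y hy => pow_ne_zero 2 (hne _ (hvr y hy))))).intervalIntegrable
    have hv'int : IntervalIntegrable
        (fun y => (fderiv ℝ κ (x,y)) (0,1) - (fderiv ℝ κ (r₀,y)) (0,1))
        MeasureTheory.volume (γ r₀) s₀ :=
      ((hcontκs x _ hvx).sub (hcontκs r₀ _ hvr)).intervalIntegrable
    have hIBP := intervalIntegral.integral_mul_deriv_eq_deriv_mul huD hvD hu'int hv'int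
    have hu'b : ∀ y ∈ Set.uIcc (γ r₀) s₀,
        |-((fderiv ℝ κ (r₀,y)) (0,1) - (fderiv ℝ lam (r₀,y)) (0,1))
          / (κ (r₀,y) - lam (r₀,y))^2| ≤ (C₂ + C₅) * C₁^2 :=
      fun y hy => hquot _ _ _ _ _ (hB2 r₀ y (hvr y hy)) (hB5 r₀ y (hvr y hy))
        (hb1 _ (hvr y hy))
    have hBbd : |∫ y in γ r₀..s₀, (κ (r₀,y) - lam (r₀,y))⁻¹
          * ((fderiv ℝ κ (x,y)) (0,1) - (fderiv ℝ κ (r₀,y)) (0,1))|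
        ≤ 2 * (C₁ * (C₃ * |x - r₀|)) + (C₂ + C₅) * C₁^2 * (C₃ * |x - r₀|) * L := by
      rw [hIBP]
      have hterm : |∫ y in γ r₀..s₀,
            (-((fderiv ℝ κ (r₀,y)) (0,1) - (fderiv ℝ lam (r₀,y)) (0,1))
              / (κ (r₀,y) - lam (r₀,y))^2) * (κ (x,y) - κ (r₀,y))|
          ≤ (C₂ + C₅) * C₁^2 * (C₃ * |x - r₀|) * L := by
        have hb := intervalIntegral.norm_integral_le_of_norm_le_const
          (C := (C₂ + C₅) * C₁^2 * (C₃ * |x - r₀|))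
          (f := fun y => (-((fderiv ℝ κ (r₀,y)) (0,1) - (fderiv ℝ lam (r₀,y)) (0,1))
              / (κ (r₀,y) - lam (r₀,y))^2) * (κ (x,y) - κ (r₀,y)))
          (a := γ r₀) (b := s₀) ?_
        · rw [Real.norm_eq_abs] at hb
          calc _ ≤ (C₂ + C₅) * C₁^2 * (C₃ * |x - r₀|) * |s₀ - γ r₀| := hb
            _ ≤ (C₂ + C₅) * C₁^2 * (C₃ * |x - r₀|) * L :=
                mul_le_mul_of_nonneg_left hLs (by positivity)
        · intro y hy
          have hy' := Set.uIoc_subset_uIcc hy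
          simp only [Real.norm_eq_abs, abs_mul]
          exact mul_le_mul (hu'b y hy') (hvb y hy') (abs_nonneg _) (by positivity)
      have he1 : |(κ (r₀,s₀) - lam (r₀,s₀))⁻¹ * (κ (x,s₀) - κ (r₀,s₀))|
          ≤ C₁ * (C₃ * |x - r₀|) := by
        rw [abs_mul]
        exact mul_le_mul (hb1 _ (hvr s₀ Set.right_mem_uIcc))
          (hvb s₀ Set.right_mem_uIcc) (abs_nonneg _) h1
      have he2 : |(κ (r₀, γ r₀) - lam (r₀, γ r₀))⁻¹ * (κ (x, γ r₀) - κ (r₀, γ r₀))|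
          ≤ C₁ * (C₃ * |x - r₀|) := by
        rw [abs_mul]
        exact mul_le_mul (hb1 _ (hvr (γ r₀) Set.left_mem_uIcc))
          (hvb (γ r₀) Set.left_mem_uIcc) (abs_nonneg _) h1
      have htri : ∀ a b c : ℝ, |a - b - c| ≤ |a| + |b| + |c| := by
        intro a b c
        calc |a - b - c| ≤ |a - b| + |c| := abs_sub _ _
          _ ≤ |a| + |b| + |c| := add_le_add (abs_sub _ _) le_rfl
      calc |(κ (r₀,s₀) - lam (r₀,s₀))⁻¹ * (κ (x,s₀) - κ (r₀,s₀))
            - (κ (r₀, γ r₀) - lam (r₀, γ r₀))⁻¹ * (κ (x, γ r₀) - κ (r₀, γ r₀))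
            - ∫ y in γ r₀..s₀,
              (-((fderiv ℝ κ (r₀,y)) (0,1) - (fderiv ℝ lam (r₀,y)) (0,1))
                / (κ (r₀,y) - lam (r₀,y))^2) * (κ (x,y) - κ (r₀,y))|
          ≤ |(κ (r₀,s₀) - lam (r₀,s₀))⁻¹ * (κ (x,s₀) - κ (r₀,s₀))|
            + |(κ (r₀, γ r₀) - lam (r₀, γ r₀))⁻¹ * (κ (x, γ r₀) - κ (r₀, γ r₀))|
            + |∫ y in γ r₀..s₀,
              (-((fderiv ℝ κ (r₀,y)) (0,1) - (fderiv ℝ lam (r₀,y)) (0,1))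
                / (κ (r₀,y) - lam (r₀,y))^2) * (κ (x,y) - κ (r₀,y))| := htri _ _ _
        _ ≤ C₁ * (C₃ * |x - r₀|) + C₁ * (C₃ * |x - r₀|)
            + (C₂ + C₅) * C₁^2 * (C₃ * |x - r₀|) * L := by
            exact add_le_add (add_le_add he1 he2) hterm
        _ = 2 * (C₁ * (C₃ * |x - r₀|)) + (C₂ + C₅) * C₁^2 * (C₃ * |x - r₀|) * L := by ring
    -- assemble
    rw [key, hT2eq]
    calc |(∫ y in γ x..γ r₀, (κ (x,y) - lam (x,y))⁻¹ * deriv (fun y' => κ (x,y')) y)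
          + ((∫ y in γ r₀..s₀, ((κ (x,y) - lam (x,y))⁻¹ - (κ (r₀,y) - lam (r₀,y))⁻¹)
              * (fderiv ℝ κ (x,y)) (0,1))
            + ∫ y in γ r₀..s₀, (κ (r₀,y) - lam (r₀,y))⁻¹
              * ((fderiv ℝ κ (x,y)) (0,1) - (fderiv ℝ κ (r₀,y)) (0,1)))|
        ≤ |∫ y in γ x..γ r₀, (κ (x,y) - lam (x,y))⁻¹ * deriv (fun y' => κ (x,y')) y|
          + (|∫ y in γ r₀..s₀, ((κ (x,y) - lam (x,y))⁻¹ - (κ (r₀,y) - lam (r₀,y))⁻¹)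
              * (fderiv ℝ κ (x,y)) (0,1)|
            + |∫ y in γ r₀..s₀, (κ (r₀,y) - lam (r₀,y))⁻¹
              * ((fderiv ℝ κ (x,y)) (0,1) - (fderiv ℝ κ (r₀,y)) (0,1))|) :=
          (abs_add_le _ _).trans (add_le_add le_rfl (abs_add_le _ _))
      _ ≤ C₁ * C₂ * (G * |x - r₀|)
          + ((C₃ + C₄) * C₁^2 * |x - r₀| * C₂ * L
            + (2 * (C₁ * (C₃ * |x - r₀|)) + (C₂ + C₅) * C₁^2 * (C₃ * |x - r₀|) * L)) :=
          add_le_add hT1 (add_le_add hAbd hBbd)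
      _ = (C₁*C₂*G + C₁^2*(C₃+C₄)*C₂*L + 2*(C₁*C₃) + C₁^2*(C₂+C₅)*C₃*L) * |x - r₀| := by
          ring
end

section
/- Suppose v : [t₀,t₁) → ℝ solves v' = A₂ v² + A₁ v + A₀ with constants |A₁| ≤ C₁, |A₀| ≤ C₀, A₂ ≥ C₂ > 0, all coefficients continuous. If v(t₀) > C₀ χ + (C₂ χ)⁻¹ + C₁/C₂ where χ = (e^{C₁(t₁-t₀)} - 1)/C₁ (or χ = t₁ - t₀ when C₁ = 0), then v cannot remain bounded (finite) on all of [t₀, t₁]; i.e., the maximal existence time of a bounded solution is strictly less than t₁. -/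
set_option maxHeartbeats 1000000 in
/-- Uniform-constant Riccati blowup criterion: if `v' = A₂ v² + A₁ v + A₀` on
`[t₀,t₁)` with `|A₁| ≤ C₁`, `|A₀| ≤ C₀`, `A₂ ≥ C₂ > 0` and
`v(t₀) > C₀ χ + (C₂ χ)⁻¹ + C₁/C₂` where `χ = (e^{C₁(t₁-t₀)} - 1)/C₁` (`χ = t₁ - t₀`
when `C₁ = 0`), then `v` cannot remain bounded on `[t₀,t₁)`. -/
theorem stmt_18 (t₀ t₁ C₀ C₁ C₂ : ℝ) (ht : t₀ < t₁)
    (hC₀ : 0 ≤ C₀) (hC₁ : 0 ≤ C₁) (hC₂ : 0 < C₂)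
    (A₂ A₁ A₀ : ℝ → ℝ)
    (hA₂c : ContinuousOn A₂ (Set.Ico t₀ t₁))
    (hA₁c : ContinuousOn A₁ (Set.Ico t₀ t₁))
    (hA₀c : ContinuousOn A₀ (Set.Ico t₀ t₁))
    (hb : ∀ t ∈ Set.Ico t₀ t₁, |A₁ t| ≤ C₁ ∧ |A₀ t| ≤ C₀ ∧ C₂ ≤ A₂ t)
    (χ : ℝ) (hχ : χ = if C₁ = 0 then t₁ - t₀ else (Real.exp (C₁ * (t₁ - t₀)) - 1) / C₁)
    (v : ℝ → ℝ)
    (hv : ∀ t ∈ Set.Ico t₀ t₁, HasDerivAt v (A₂ t * v t ^ 2 + A₁ t * v t + A₀ t) t)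
    (hv₀ : v t₀ > C₀ * χ + (C₂ * χ)⁻¹ + C₁ / C₂) :
    ¬ ∃ M : ℝ, ∀ t ∈ Set.Ico t₀ t₁, |v t| ≤ M := by
  intro _
  have hT : 0 < t₁ - t₀ := sub_pos.2 ht
  have hχpos : 0 < χ := by
    rw [hχ]; split_ifs with hc
    · exact hT
    · have hc' : 0 < C₁ := hC₁.lt_of_ne' hc
      have h1 : C₁ * (t₁ - t₀) + 1 ≤ Real.exp (C₁ * (t₁ - t₀)) := Real.add_one_le_exp _
      have h2 : 0 < C₁ * (t₁ - t₀) := mul_pos hc' hT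
      have : 0 < Real.exp (C₁ * (t₁ - t₀)) - 1 := by linarith
      exact div_pos this hc'
  set h₀ : ℝ := v t₀ - C₀ * χ with hh₀def
  have hh₀pos : 0 < h₀ := by
    have h1 : 0 < (C₂ * χ)⁻¹ := by positivity
    have h2 : 0 ≤ C₁ / C₂ := by positivity
    rw [hh₀def]; linarith
  -- the comparison primitives
  set P : ℝ → ℝ := fun t => ∫ u in t₀..t, C₂ * Real.exp (-(C₁ * (u - t₀))) with hPdef
  set Q : ℝ → ℝ := fun t => ∫ u in t₀..t, C₀ * Real.exp (C₁ * (u - t₀)) with hQdef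
  set F : ℝ → ℝ := fun t => ∫ u in t₀..t, A₁ u with hFdef
  have pc : Continuous fun u : ℝ => C₂ * Real.exp (-(C₁ * (u - t₀))) := by fun_prop
  have qc : Continuous fun u : ℝ => C₀ * Real.exp (C₁ * (u - t₀)) := by fun_prop
  -- derivatives of P and Q (everywhere)
  have hP' : ∀ t : ℝ, HasDerivAt P (C₂ * Real.exp (-(C₁ * (t - t₀)))) t := by
    intro t
    rw [hPdef]
    exact intervalIntegral.integral_hasDerivAt_right (pc.intervalIntegrable _ _)
      (pc.stronglyMeasurableAtFilter _ _) pc.continuousAt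
  have hQ' : ∀ t : ℝ, HasDerivAt Q (C₀ * Real.exp (C₁ * (t - t₀))) t := by
    intro t
    rw [hQdef]
    exact intervalIntegral.integral_hasDerivAt_right (qc.intervalIntegrable _ _)
      (qc.stronglyMeasurableAtFilter _ _) qc.continuousAt
  have hP0 : P t₀ = 0 := by rw [hPdef]; simp
  have hQ0 : Q t₀ = 0 := by rw [hQdef]; simp
  have hQapp : ∀ t, Q t = ∫ u in t₀..t, C₀ * Real.exp (C₁ * (u - t₀)) := fun t => by rw [hQdef]
  have hPapp : ∀ t, P t = ∫ u in t₀..t, C₂ * Real.exp (-(C₁ * (u - t₀))) := fun t => by rw [hPdef]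
  -- value of Q at t₁ and monotone bound
  have hQval : Q t₁ = C₀ * χ := by
    rcases eq_or_ne C₁ 0 with hc | hc
    · rw [hQapp]
      simp only [hc, zero_mul, Real.exp_zero, mul_one, hχ, if_pos hc,
        intervalIntegral.integral_const, smul_eq_mul, if_true]
      ring
    · have hc' : 0 < C₁ := hC₁.lt_of_ne' hc
      have hanti : ∀ x ∈ Set.uIcc t₀ t₁,
          HasDerivAt (fun u => (C₀ / C₁) * Real.exp (C₁ * (u - t₀)))
            (C₀ * Real.exp (C₁ * (x - t₀))) x := by
        intro x _
        have h1 : HasDerivAt (fun u : ℝ => C₁ * (u - t₀)) C₁ x := by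
          simpa using ((hasDerivAt_id x).sub_const t₀).const_mul C₁
        have := (h1.exp).const_mul (C₀ / C₁)
        refine this.congr_deriv ?_
        field_simp
      have := intervalIntegral.integral_eq_sub_of_hasDerivAt hanti
        ((qc.intervalIntegrable _ _))
      rw [hQapp, this, hχ, if_neg hc]
      simp only [sub_self, mul_zero, Real.exp_zero, mul_one]
      field_simp
  have hQle : ∀ t, t₀ ≤ t → t ≤ t₁ → Q t ≤ C₀ * χ := by
    intro t h1 h2
    rw [← hQval]
    have hi1 : IntervalIntegrable (fun u => C₀ * Real.exp (C₁ * (u - t₀))) MeasureTheory.volume t₀ t :=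
      qc.intervalIntegrable _ _
    have hi2 : IntervalIntegrable (fun u => C₀ * Real.exp (C₁ * (u - t₀))) MeasureTheory.volume t t₁ :=
      qc.intervalIntegrable _ _
    have hadd := intervalIntegral.integral_add_adjacent_intervals hi1 hi2
    have hnn : 0 ≤ ∫ u in t..t₁, C₀ * Real.exp (C₁ * (u - t₀)) :=
      intervalIntegral.integral_nonneg h2 (fun u _ => by positivity)
    rw [hQapp t, hQapp t₁, ← hadd]
    linarith
  -- key numeric inequality : h₀⁻¹ < P t₁
  have hPt₁ : h₀⁻¹ < P t₁ := by
    rcases eq_or_ne C₁ 0 with hc | hc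
    · have hPv : P t₁ = C₂ * (t₁ - t₀) := by
        rw [hPdef]
        simp [hc]
        ring
      have hχv : χ = t₁ - t₀ := by rw [hχ, if_pos hc]
      have h1 : (C₂ * χ)⁻¹ < h₀ := by
        rw [hh₀def]
        have : C₁ / C₂ = 0 := by rw [hc]; simp
        linarith [hv₀, this]
      have h2 : 0 < (C₂ * χ)⁻¹ := by positivity
      have := inv_strictAnti₀ h2 h1
      rw [inv_inv] at this
      rw [hPv, ← hχv]
      linarith
    · have hc' : 0 < C₁ := hC₁.lt_of_ne' hc
      set E : ℝ := Real.exp (C₁ * (t₁ - t₀)) with hEdef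
      have hE1 : 1 < E := by
        have h1 : C₁ * (t₁ - t₀) + 1 ≤ E := Real.add_one_le_exp _
        nlinarith [mul_pos hc' hT]
      have hEpos : 0 < E := by linarith
      have hPv : P t₁ = (C₂ / C₁) * (1 - E⁻¹) := by
        have hanti : ∀ x ∈ Set.uIcc t₀ t₁,
            HasDerivAt (fun u => -(C₂ / C₁) * Real.exp (-(C₁ * (u - t₀))))
              (C₂ * Real.exp (-(C₁ * (x - t₀)))) x := by
          intro x _
          have h1 : HasDerivAt (fun u : ℝ => -(C₁ * (u - t₀))) (-C₁) x := by
            simpa [Pi.neg_def] using (((hasDerivAt_id x).sub_const t₀).const_mul C₁).neg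
          have := (h1.exp).const_mul (-(C₂ / C₁))
          refine this.congr_deriv ?_
          field_simp
        have := intervalIntegral.integral_eq_sub_of_hasDerivAt hanti
          (pc.intervalIntegrable _ _)
        rw [hPapp, this]
        simp only [sub_self, mul_zero, neg_zero, Real.exp_zero, mul_one]
        rw [Real.exp_neg, ← hEdef]
        ring
      have hχv : χ = (E - 1) / C₁ := by rw [hχ, if_neg hc, hEdef]
      have hPpos : 0 < P t₁ := by
        rw [hPv]
        have : E⁻¹ < 1 := by
          rw [inv_lt_one_iff₀]
          right; exact hE1
        have h2 : 0 < C₂ / C₁ := by positivity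
        nlinarith
      have hrec : (P t₁)⁻¹ = (C₂ * χ)⁻¹ + C₁ / C₂ := by
        rw [hPv, hχv]
        have hE1' : E - 1 ≠ 0 := by linarith
        have : (1 : ℝ) - E⁻¹ = (E - 1) / E := by field_simp
        rw [this]
        field_simp
        ring
      have h1 : (P t₁)⁻¹ < h₀ := by
        rw [hrec, hh₀def]; linarith [hv₀]
      have h2 : 0 < (P t₁)⁻¹ := by positivity
      have := inv_strictAnti₀ h2 h1
      rwa [inv_inv] at this
  -- choose s < t₁ with h₀⁻¹ < P s
  have hPc : ContinuousAt P t₁ := (hP' t₁).continuousAt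
  have hev : ∀ᶠ x in nhds t₁, h₀⁻¹ < P x := hPc.eventually (eventually_gt_nhds hPt₁)
  haveI : Filter.NeBot (nhdsWithin t₁ (Set.Ioo t₀ t₁)) := right_nhdsWithin_Ioo_neBot ht
  have hev2 : ∀ᶠ x in nhdsWithin t₁ (Set.Ioo t₀ t₁), h₀⁻¹ < P x ∧ x ∈ Set.Ioo t₀ t₁ :=
    (hev.filter_mono nhdsWithin_le_nhds).and eventually_mem_nhdsWithin
  obtain ⟨s, hPs, hs⟩ := hev2.exists
  -- setup on [t₀, s]
  have hst₁ : s < t₁ := hs.2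
  have ht₀s : t₀ < s := hs.1
  have hsub : Set.Icc t₀ s ⊆ Set.Ico t₀ t₁ := fun x hx => ⟨hx.1, lt_of_le_of_lt hx.2 hst₁⟩
  have hvcont : ContinuousOn v (Set.Icc t₀ s) := fun x hx =>
    ((hv x (hsub hx)).continuousAt).continuousWithinAt
  -- facts about F
  have hFle : ∀ t ∈ Set.Icc t₀ s, |F t| ≤ C₁ * (t - t₀) := by
    intro t htm
    rw [hFdef]
    have h1 : ∀ x ∈ Set.uIoc t₀ t, ‖A₁ x‖ ≤ C₁ := by
      intro x hx
      rw [Set.uIoc_of_le htm.1] at hx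
      exact (hb x ⟨hx.1.le, lt_of_le_of_lt (hx.2.trans htm.2) hst₁⟩).1
    have := intervalIntegral.norm_integral_le_of_norm_le_const h1
    rwa [Real.norm_eq_abs, abs_of_nonneg (sub_nonneg.2 htm.1)] at this
  have hF0 : F t₀ = 0 := by rw [hFdef]; simp
  have hFcont : ContinuousOn F (Set.Icc t₀ s) := by
    rw [hFdef]
    have : MeasureTheory.IntegrableOn A₁ (Set.uIcc t₀ s) MeasureTheory.volume := by
      rw [Set.uIcc_of_le ht₀s.le]
      exact (hA₁c.mono hsub).integrableOn_compact isCompact_Icc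
    have := intervalIntegral.continuousOn_primitive_interval this
    rwa [Set.uIcc_of_le ht₀s.le] at this
  have hF' : ∀ t ∈ Set.Ioo t₀ s, HasDerivAt F (A₁ t) t := by
    intro t htm
    have htIoo : t ∈ Set.Ioo t₀ t₁ := ⟨htm.1, htm.2.trans hst₁⟩
    have hA₁Ioo : ContinuousOn A₁ (Set.Ioo t₀ t₁) := hA₁c.mono Set.Ioo_subset_Ico_self
    have hint : IntervalIntegrable A₁ MeasureTheory.volume t₀ t := by
      apply ContinuousOn.intervalIntegrable
      rw [Set.uIcc_of_le htm.1.le]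
      exact hA₁c.mono (fun x hx => ⟨hx.1, lt_of_le_of_lt hx.2 htIoo.2⟩)
    have hmeas := hA₁Ioo.stronglyMeasurableAtFilter isOpen_Ioo t htIoo
      (μ := MeasureTheory.volume)
    have hcont : ContinuousAt A₁ t :=
      hA₁Ioo.continuousAt (Ioo_mem_nhds htIoo.1 htIoo.2)
    rw [hFdef]
    exact intervalIntegral.integral_hasDerivAt_right hint hmeas hcont
  -- the function h
  set hf : ℝ → ℝ := fun t => Real.exp (-(F t)) * v t + Q t - C₀ * χ with hhfdef
  have hhf0 : hf t₀ = h₀ := by rw [hhfdef]; simp [hF0, hQ0, hh₀def]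
  have hQcont : ContinuousOn Q (Set.Icc t₀ s) :=
    fun x _ => (hQ' x).continuousAt.continuousWithinAt
  have hhfcont : ContinuousOn hf (Set.Icc t₀ s) := by
    rw [hhfdef]
    exact ((((Real.continuous_exp.comp_continuousOn hFcont.neg)).mul hvcont).add
      hQcont).sub continuousOn_const
  set Dh : ℝ → ℝ := fun t =>
    Real.exp (-(F t)) * (A₂ t * v t ^ 2 + A₀ t) + C₀ * Real.exp (C₁ * (t - t₀)) with hDhdef
  have hDapp : ∀ t, Dh t
      = Real.exp (-(F t)) * (A₂ t * v t ^ 2 + A₀ t) + C₀ * Real.exp (C₁ * (t - t₀)) :=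
    fun t => by rw [hDhdef]
  have hfapp : ∀ t, hf t = Real.exp (-(F t)) * v t + Q t - C₀ * χ := fun t => by rw [hhfdef]
  have hhf' : ∀ t ∈ Set.Ioo t₀ s, HasDerivAt hf (Dh t) t := by
    intro t htm
    have he : HasDerivAt (fun u => Real.exp (-(F u))) (Real.exp (-(F t)) * (-(A₁ t))) t :=
      ((hF' t htm).neg).exp
    have hvt := hv t (hsub ⟨htm.1.le, htm.2.le⟩)
    have := ((he.mul hvt).add (hQ' t)).sub_const (C₀ * χ)
    rw [hhfdef, hDapp]
    refine this.congr_deriv ?_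
    ring
  -- positivity chain
  have hexpFle : ∀ t ∈ Set.Icc t₀ s, Real.exp (-(F t)) ≤ Real.exp (C₁ * (t - t₀)) := by
    intro t htm
    apply Real.exp_le_exp.2
    have := hFle t htm
    rw [abs_le] at this
    linarith [this.1]
  have hDcore : ∀ t ∈ Set.Icc t₀ s, Real.exp (-(F t)) * (A₂ t * v t ^ 2) ≤ Dh t := by
    intro t htm'
    have hA₀b := (hb t (hsub htm')).2.1
    rw [abs_le] at hA₀b
    have he1 : 0 < Real.exp (-(F t)) := Real.exp_pos _
    have he2 := hexpFle t htm'
    have h2 : Real.exp (-(F t)) * C₀ ≤ Real.exp (C₁ * (t - t₀)) * C₀ :=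
      mul_le_mul_of_nonneg_right he2 hC₀
    have h3 : Real.exp (-(F t)) * (-C₀) ≤ Real.exp (-(F t)) * A₀ t :=
      mul_le_mul_of_nonneg_left hA₀b.1 he1.le
    have hd : Real.exp (-(F t)) * (A₂ t * v t ^ 2 + A₀ t)
        = Real.exp (-(F t)) * (A₂ t * v t ^ 2) + Real.exp (-(F t)) * A₀ t := by ring
    have hneg : Real.exp (-(F t)) * (-C₀) = -(Real.exp (-(F t)) * C₀) := by ring
    rw [hDapp]
    linarith
  have hDh_nonneg : ∀ t ∈ Set.Ioo t₀ s, 0 ≤ Dh t := by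
    intro t htm
    have htm' : t ∈ Set.Icc t₀ s := ⟨htm.1.le, htm.2.le⟩
    have hA₂b := (hb t (hsub htm')).2.2
    have h1 : 0 ≤ Real.exp (-(F t)) * (A₂ t * v t ^ 2) := by
      have : 0 ≤ A₂ t := le_trans hC₂.le hA₂b
      positivity
    exact le_trans h1 (hDcore t htm')
  have hhfmono : MonotoneOn hf (Set.Icc t₀ s) := by
    apply monotoneOn_of_deriv_nonneg (convex_Icc _ _) hhfcont
    · intro x hx
      rw [interior_Icc] at hx
      exact (hhf' x hx).differentiableAt.differentiableWithinAt
    · intro x hx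
      rw [interior_Icc] at hx
      rw [(hhf' x hx).deriv]
      exact hDh_nonneg x hx
  have hhfge : ∀ t ∈ Set.Icc t₀ s, h₀ ≤ hf t := by
    intro t htm
    rw [← hhf0]
    exact hhfmono (Set.left_mem_Icc.2 ht₀s.le) htm htm.1
  have hhfpos : ∀ t ∈ Set.Icc t₀ s, 0 < hf t := fun t htm => lt_of_lt_of_le hh₀pos (hhfge t htm)
  -- the function ρ
  set ρ : ℝ → ℝ := fun t => -(hf t)⁻¹ - P t with hρdef
  have hρcont : ContinuousOn ρ (Set.Icc t₀ s) := by
    rw [hρdef]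
    exact ((hhfcont.inv₀ (fun x hx => (hhfpos x hx).ne')).neg).sub
      (fun x _ => (hP' x).continuousAt.continuousWithinAt)
  have hρ' : ∀ t ∈ Set.Ioo t₀ s,
      HasDerivAt ρ (Dh t / hf t ^ 2 - C₂ * Real.exp (-(C₁ * (t - t₀)))) t := by
    intro t htm
    have hne : hf t ≠ 0 := (hhfpos t ⟨htm.1.le, htm.2.le⟩).ne'
    have hinv := ((hhf' t htm).inv hne).neg
    have := hinv.sub (hP' t)
    rw [hρdef]
    refine this.congr_deriv ?_
    ring
  have hρ'_nonneg : ∀ t ∈ Set.Ioo t₀ s,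
      0 ≤ Dh t / hf t ^ 2 - C₂ * Real.exp (-(C₁ * (t - t₀))) := by
    intro t htm
    have htm' : t ∈ Set.Icc t₀ s := ⟨htm.1.le, htm.2.le⟩
    have hpos := hhfpos t htm'
    rw [sub_nonneg, le_div_iff₀ (by positivity : (0:ℝ) < hf t ^ 2)]
    -- show  C₂ * e^{-C₁Δ} * (hf t)² ≤ Dh t
    have hA₀b := (hb t (hsub htm')).2.1
    have hA₂b := (hb t (hsub htm')).2.2
    rw [abs_le] at hA₀b
    have he1 : 0 < Real.exp (-(F t)) := Real.exp_pos _
    have he2 := hexpFle t htm'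
    -- hf t ≤ exp(-F t) * v t
    have hQb := hQle t htm'.1 (htm'.2.trans hst₁.le)
    have hwge : hf t ≤ Real.exp (-(F t)) * v t := by
      rw [hfapp]; linarith
    -- key : exp(-C₁Δ) * exp(-F)*exp(-F) ≤ exp(-F)
    have hkey : Real.exp (-(C₁ * (t - t₀))) * (Real.exp (-(F t)) * Real.exp (-(F t)))
        ≤ Real.exp (-(F t)) := by
      rw [← Real.exp_add, ← Real.exp_add]
      apply Real.exp_le_exp.2
      have := hFle t htm'
      rw [abs_le] at this
      linarith [this.2]
    have hDge : Real.exp (-(F t)) * (A₂ t * v t ^ 2) ≤ Dh t := hDcore t htm'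
    have hchain : C₂ * Real.exp (-(C₁ * (t - t₀))) * hf t ^ 2
        ≤ Real.exp (-(F t)) * (A₂ t * v t ^ 2) := by
      have h2 : hf t ^ 2 ≤ (Real.exp (-(F t)) * v t) ^ 2 :=
        pow_le_pow_left₀ hpos.le hwge 2
      have h6 : C₂ * v t ^ 2 ≤ A₂ t * v t ^ 2 :=
        mul_le_mul_of_nonneg_right hA₂b (sq_nonneg _)
      calc C₂ * Real.exp (-(C₁ * (t - t₀))) * hf t ^ 2
          = C₂ * Real.exp (-(C₁ * (t - t₀))) * hf t ^ 2 := rfl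
        _ ≤ C₂ * Real.exp (-(C₁ * (t - t₀))) * (Real.exp (-(F t)) * v t) ^ 2 :=
            mul_le_mul_of_nonneg_left h2 (by positivity)
        _ = C₂ * v t ^ 2 *
              (Real.exp (-(C₁ * (t - t₀))) * (Real.exp (-(F t)) * Real.exp (-(F t)))) := by
            ring
        _ ≤ C₂ * v t ^ 2 * Real.exp (-(F t)) :=
            mul_le_mul_of_nonneg_left hkey (by positivity)
        _ = Real.exp (-(F t)) * (C₂ * v t ^ 2) := by ring
        _ ≤ Real.exp (-(F t)) * (A₂ t * v t ^ 2) :=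
            mul_le_mul_of_nonneg_left h6 he1.le
    calc C₂ * Real.exp (-(C₁ * (t - t₀))) * hf t ^ 2
        ≤ Real.exp (-(F t)) * (A₂ t * v t ^ 2) := hchain
      _ ≤ Dh t := hDge
  have hρmono : MonotoneOn ρ (Set.Icc t₀ s) := by
    apply monotoneOn_of_deriv_nonneg (convex_Icc _ _) hρcont
    · intro x hx
      rw [interior_Icc] at hx
      exact (hρ' x hx).differentiableAt.differentiableWithinAt
    · intro x hx
      rw [interior_Icc] at hx
      rw [(hρ' x hx).deriv]
      exact hρ'_nonneg x hx
  -- final contradiction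
  have hfin := hρmono (Set.left_mem_Icc.2 ht₀s.le) (Set.right_mem_Icc.2 ht₀s.le) ht₀s.le
  rw [hρdef] at hfin
  simp only [hhf0, hP0, sub_zero] at hfin
  have h1 : 0 < (hf s)⁻¹ := inv_pos.2 (hhfpos s (Set.right_mem_Icc.2 ht₀s.le))
  -- hfin : -h₀⁻¹ ≤ -(hf s)⁻¹ - P s
  linarith [hPs]
end
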